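/- arXiv:1504.00800 — 4 statements merged into one kernel-verified Lean document; each statement's English description precedes it below -/
import Mathlib

section
/- Let n ≥ 1, let A be an n×n nonnegative real matrix with positive max-times spectral radius λ = λ(A), let C be an n×n nonnegative real matrix with max_{1≤k≤n} max_i (C^{⊗k})_{ii} ≤ 1, and let θ = max( λ, max_{1≤k≤n−1} max_{(i_1,…,i_k) ∈ ℕ^k, 1 ≤ i_1+⋯+i_k ≤ n−k} ( max_i (A ⊗ C^{⊗i_1} ⊗ ⋯ ⊗ A ⊗ C^{⊗i_k})_{ii} )^{1/k} ). A positive vector x ∈ ℝ_{>0}^n satisfies both max_j C_{ij} x_j ≤ x_i for all i and max_{i,j} A_{ij} x_j / x_i = θ (i.e., x is a minimizer of the constrained problem) if and only if there exists a positive vector u ∈ ℝ_{>0}^n such that x = D^* ⊗ u, where D is the matrix with entries D_{ij} = max(θ^{-1} A_{ij}, C_{ij}). -/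
open scoped BigOperators

noncomputable section

/-- The max-times spectral radius (maximum geometric cycle mean) of a
nonnegative `n × n` real matrix. -/
def mtSpecRad {n : ℕ} (A : Matrix (Fin n) (Fin n) ℝ) : ℝ :=
  sSup { r : ℝ | ∃ (k : ℕ) (hk : 0 < k), k ≤ n ∧ ∃ f : Fin k → Fin n,
    r = (∏ t : Fin k, A (f t) (f ⟨((t : ℕ) + 1) % k, Nat.mod_lt _ hk⟩)) ^ ((k : ℝ)⁻¹) }

/-- The maximum cycle mean of a real `n × n` matrix (max-plus spectral radius). -/
def mpCycleMean {n : ℕ} (A : Matrix (Fin n) (Fin n) ℝ) : ℝ :=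
  sSup { r : ℝ | ∃ (k : ℕ) (hk : 0 < k), k ≤ n ∧ ∃ f : Fin k → Fin n,
    r = (∑ t : Fin k, A (f t) (f ⟨((t : ℕ) + 1) % k, Nat.mod_lt _ hk⟩)) / (k : ℝ) }

/-- Max-times matrix product. -/
def mtMul {n : ℕ} (A B : Matrix (Fin n) (Fin n) ℝ) : Matrix (Fin n) (Fin n) ℝ :=
  Matrix.of fun i j => ⨆ k : Fin n, A i k * B k j

/-- Max-times matrix powers, with `A^{⊗0} = I`. -/
def mtPow {n : ℕ} (A : Matrix (Fin n) (Fin n) ℝ) : ℕ → Matrix (Fin n) (Fin n) ℝ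
  | 0 => Matrix.of fun i j => if i = j then 1 else 0
  | (k + 1) => mtMul (mtPow A k) A

/-- Max-times Kleene star: entrywise maximum of `I, S, S^{⊗2}, …, S^{⊗(n-1)}`. -/
def mtStar {n : ℕ} (S : Matrix (Fin n) (Fin n) ℝ) : Matrix (Fin n) (Fin n) ℝ :=
  Matrix.of fun i j => ⨆ k : Fin n, mtPow S (k : ℕ) i j

/-- Max-times matrix-vector product. -/
def mtVecMul {n : ℕ} (S : Matrix (Fin n) (Fin n) ℝ) (u : Fin n → ℝ) : Fin n → ℝ :=
  fun i => ⨆ j, S i j * u j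

/-- Max-plus matrix product. -/
def mpMul {n : ℕ} (A B : Matrix (Fin n) (Fin n) ℝ) : Matrix (Fin n) (Fin n) ℝ :=
  Matrix.of fun i j => ⨆ k : Fin n, (A i k + B k j)

/-- `mpPow A k` is the max-plus power `A^{⊗(k+1)}`. -/
def mpPow {n : ℕ} (A : Matrix (Fin n) (Fin n) ℝ) : ℕ → Matrix (Fin n) (Fin n) ℝ
  | 0 => A
  | (k + 1) => mpMul (mpPow A k) A

/-- Max-plus Kleene star: `S^*_{ii} = max(0, max_{1≤k≤n-1} (S^{⊗k})_{ii})` and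
`S^*_{ij} = max_{1≤k≤n-1} (S^{⊗k})_{ij}` for `i ≠ j`. -/
def mpStar {n : ℕ} (S : Matrix (Fin n) (Fin n) ℝ) : Matrix (Fin n) (Fin n) ℝ :=
  Matrix.of fun i j =>
    if i = j then max 0 (⨆ k : Fin (n - 1), mpPow S (k : ℕ) i j)
    else ⨆ k : Fin (n - 1), mpPow S (k : ℕ) i j

/-- Max-plus matrix-vector product. -/
def mpVecMul {n : ℕ} (S : Matrix (Fin n) (Fin n) ℝ) (x : Fin n → ℝ) : Fin n → ℝ :=
  fun i => ⨆ j, (S i j + x j)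

/-- Chebyshev-like (max-times) distance between a nonnegative matrix `A` and the
rank-one reciprocal matrix with entries `x i / x j`. -/
def mtRho {n : ℕ} (A : Matrix (Fin n) (Fin n) ℝ) (x : Fin n → ℝ) : ℝ :=
  max (⨆ p : Fin n × Fin n, A p.1 p.2 * x p.2 / x p.1)
    (sSup { r : ℝ | ∃ i j, 0 < A i j ∧ r = x i / (A i j * x j) })

/-- The alternating max-times product `A ⊗ C^{⊗ i₁} ⊗ A ⊗ C^{⊗ i₂} ⊗ ⋯ ⊗ A ⊗ C^{⊗ i_k}`. -/
def mtChain {n : ℕ} (A C : Matrix (Fin n) (Fin n) ℝ) :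
    (k : ℕ) → (Fin k → ℕ) → Matrix (Fin n) (Fin n) ℝ
  | 0, _ => Matrix.of fun i j => if i = j then 1 else 0
  | (k + 1), f => mtMul (mtMul A (mtPow C (f 0))) (mtChain A C k (fun t => f t.succ))

/-- The optimal value `θ` of the constrained max-times approximation problem. -/
def mtTheta {n : ℕ} (A C : Matrix (Fin n) (Fin n) ℝ) : ℝ :=
  max (mtSpecRad A)
    (sSup { r : ℝ | ∃ k : ℕ, 0 < k ∧ k ≤ n - 1 ∧ ∃ f : Fin k → ℕ,
      1 ≤ ∑ t, f t ∧ (∑ t, f t) ≤ n - k ∧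
      r = (⨆ i, mtChain A C k f i i) ^ ((k : ℝ)⁻¹) })


set_option linter.unusedSectionVars false
section MTAux

open Finset

variable {n : ℕ}

lemma fle {α : Type*} [Fintype α] (f : α → ℝ) (i : α) : f i ≤ ⨆ j, f j :=
  le_ciSup (Set.Finite.bddAbove (Set.finite_range f)) i

lemma fsup_le {α : Type*} [Fintype α] [Nonempty α] {f : α → ℝ} {a : ℝ}
    (h : ∀ i, f i ≤ a) : (⨆ i, f i) ≤ a := ciSup_le h

lemma fsup_nonneg {α : Type*} [Fintype α] [Nonempty α] {f : α → ℝ}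
    (h : ∀ i, 0 ≤ f i) : 0 ≤ ⨆ i, f i :=
  le_trans (h (Classical.arbitrary α)) (fle f _)

variable [NeZero n]

lemma mtMul_apply (A B : Matrix (Fin n) (Fin n) ℝ) (i j : Fin n) :
    mtMul A B i j = ⨆ k, A i k * B k j := rfl

lemma le_mtMul (A B : Matrix (Fin n) (Fin n) ℝ) (i j l : Fin n) :
    A i l * B l j ≤ mtMul A B i j := fle (fun l => A i l * B l j) l

lemma mtMul_le {A B : Matrix (Fin n) (Fin n) ℝ} {i j : Fin n} {a : ℝ}
    (h : ∀ l, A i l * B l j ≤ a) : mtMul A B i j ≤ a := ciSup_le h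

lemma mtMul_nonneg {A B : Matrix (Fin n) (Fin n) ℝ} (hA : ∀ i j, 0 ≤ A i j)
    (hB : ∀ i j, 0 ≤ B i j) (i j : Fin n) : 0 ≤ mtMul A B i j :=
  le_trans (mul_nonneg (hA i i) (hB i j)) (le_mtMul A B i j i)

lemma mtPow_zero_apply (D : Matrix (Fin n) (Fin n) ℝ) (i j : Fin n) :
    mtPow D 0 i j = if i = j then 1 else 0 := rfl

lemma mtPow_nonneg {D : Matrix (Fin n) (Fin n) ℝ} (hD : ∀ i j, 0 ≤ D i j) :
    ∀ k i j, 0 ≤ mtPow D k i j := by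
  intro k
  induction k with
  | zero => intro i j; rw [mtPow_zero_apply]; split <;> norm_num
  | succ k ih => intro i j; exact mtMul_nonneg ih hD i j

/-- weight of the path `p 0, p 1, …, p k` -/
noncomputable def ppow (D : Matrix (Fin n) (Fin n) ℝ) (p : ℕ → Fin n) (k : ℕ) : ℝ :=
  ∏ t ∈ Finset.range k, D (p t) (p (t + 1))

lemma ppow_nonneg {D : Matrix (Fin n) (Fin n) ℝ} (hD : ∀ i j, 0 ≤ D i j)
    (p : ℕ → Fin n) (k : ℕ) : 0 ≤ ppow D p k :=
  Finset.prod_nonneg fun t _ => hD _ _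

lemma ppow_le_mtPow {D : Matrix (Fin n) (Fin n) ℝ} (hD : ∀ i j, 0 ≤ D i j)
    (p : ℕ → Fin n) : ∀ k, ppow D p k ≤ mtPow D k (p 0) (p k) := by
  intro k
  induction k with
  | zero => simp [ppow, mtPow_zero_apply]
  | succ k ih =>
      have h1 : ppow D p (k+1) = ppow D p k * D (p k) (p (k+1)) := by
        rw [ppow, Finset.prod_range_succ]; rfl
      rw [h1]
      calc ppow D p k * D (p k) (p (k+1))
          ≤ mtPow D k (p 0) (p k) * D (p k) (p (k+1)) :=
            mul_le_mul_of_nonneg_right ih (hD _ _)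
        _ ≤ mtPow D (k+1) (p 0) (p (k+1)) := le_mtMul _ _ _ _ _

lemma mtPow_one_le {D : Matrix (Fin n) (Fin n) ℝ} (hD : ∀ i j, 0 ≤ D i j)
    (i j : Fin n) : mtPow D 1 i j ≤ D i j := by
  apply mtMul_le
  intro l
  rw [mtPow_zero_apply]
  rcases eq_or_ne i l with h | h
  · simp [h]
  · simp [h]; exact hD i j

lemma mtPow_le_ppow {D : Matrix (Fin n) (Fin n) ℝ} (hD : ∀ i j, 0 ≤ D i j) :
    ∀ k (i j : Fin n), ∃ p : ℕ → Fin n, p 0 = i ∧ p (k+1) = j ∧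
      mtPow D (k+1) i j ≤ ppow D p (k+1) := by
  intro k
  induction k with
  | zero =>
      intro i j
      refine ⟨fun t => if t = 0 then i else j, by simp, by simp, ?_⟩
      have : ppow D (fun t => if t = 0 then i else j) 1 = D i j := by
        simp [ppow]
      rw [this]; exact mtPow_one_le hD i j
  | succ k ih =>
      intro i j
      obtain ⟨l, hl⟩ := Finite.exists_max (fun l => mtPow D (k+1) i l * D l j)
      obtain ⟨p, hp0, hpk, hple⟩ := ih i l
      set q : ℕ → Fin n := fun t => if t ≤ k+1 then p t else j with hq
      have hqt : ∀ t, t ≤ k+1 → q t = p t := by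
        intro t ht; simp only [hq]; rw [if_pos ht]
      have hqk : ppow D q (k+2) = ppow D q (k+1) * D (q (k+1)) (q (k+2)) := by
        rw [ppow, Finset.prod_range_succ]; rfl
      have hqp : ppow D q (k+1) = ppow D p (k+1) := by
        apply Finset.prod_congr rfl
        intro t ht
        simp only [Finset.mem_range] at ht
        rw [hqt t (by omega), hqt (t+1) (by omega)]
      have hq1 : q (k+1) = l := by rw [hqt (k+1) le_rfl, hpk]
      have hq2 : q (k+2) = j := by simp only [hq]; rw [if_neg (by omega)]
      refine ⟨q, ?_, hq2, ?_⟩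
      · rw [hqt 0 (by omega), hp0]
      calc mtPow D (k+2) i j ≤ mtPow D (k+1) i l * D l j := mtMul_le fun m => hl m
        _ ≤ ppow D p (k+1) * D l j := mul_le_mul_of_nonneg_right hple (hD _ _)
        _ = ppow D q (k+2) := by rw [hqk, hqp, hq1, hq2]

end MTAux
section MTAux2

open Finset

variable {n : ℕ} [NeZero n]

lemma npos : 0 < n := Nat.pos_of_ne_zero (NeZero.ne n)

lemma mtStar_apply (D : Matrix (Fin n) (Fin n) ℝ) (i j : Fin n) :
    mtStar D i j = ⨆ m : Fin n, mtPow D (m : ℕ) i j := rfl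

lemma mtPow_le_mtStar {D : Matrix (Fin n) (Fin n) ℝ} {m : ℕ} (hm : m < n) (i j : Fin n) :
    mtPow D m i j ≤ mtStar D i j :=
  fle (fun m : Fin n => mtPow D (m : ℕ) i j) ⟨m, hm⟩

lemma one_le_mtStar_diag (D : Matrix (Fin n) (Fin n) ℝ) (i : Fin n) :
    1 ≤ mtStar D i i := by
  have h := mtPow_le_mtStar (D := D) npos i i
  rw [mtPow_zero_apply, if_pos rfl] at h
  exact h

/-- prepend an edge to a power -/
lemma mul_mtPow_le {D : Matrix (Fin n) (Fin n) ℝ} (hD : ∀ i j, 0 ≤ D i j) :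
    ∀ (m : ℕ) (i j l : Fin n), D i j * mtPow D m j l ≤ mtPow D (m+1) i l := by
  intro m i j l
  rcases m with _ | m
  · rw [mtPow_zero_apply]
    rcases eq_or_ne j l with h | h
    · subst h
      rw [if_pos rfl, mul_one]
      have : D i j * 1 ≤ mtPow D 1 i j := by
        have := le_mtMul (mtPow D 0) D i j i
        rw [mtPow_zero_apply, if_pos rfl, one_mul] at this
        rw [mul_one]; exact this
      rw [mul_one] at this; exact this
    · rw [if_neg h, mul_zero]
      exact mtPow_nonneg hD 1 i l
  · obtain ⟨p, hp0, hpk, hple⟩ := mtPow_le_ppow hD m j l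
    set q : ℕ → Fin n := fun t => if t = 0 then i else p (t - 1) with hq
    have hqs : ∀ t, q (t+1) = p t := by intro t; simp [hq]
    have hsplit : ppow D q (m+2) = (∏ t ∈ Finset.range (m+1), D (q (t+1)) (q (t+2))) * D (q 0) (q 1) := by
      rw [ppow, Finset.prod_range_succ']
    have h2 : (∏ t ∈ Finset.range (m+1), D (q (t+1)) (q (t+2))) = ppow D p (m+1) := by
      apply Finset.prod_congr rfl
      intro t _
      rw [hqs t, hqs (t+1)]
    have hq0 : q 0 = i := by simp [hq]
    have hqlast : q (m+2) = p (m+1) := hqs (m+1)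
    calc D i j * mtPow D (m+1) j l ≤ D i j * ppow D p (m+1) :=
          mul_le_mul_of_nonneg_left hple (hD _ _)
      _ = ppow D q (m+2) := by
          rw [hsplit, h2, hq0, hqs 0, hp0, mul_comm]
      _ ≤ mtPow D (m+2) (q 0) (q (m+2)) := ppow_le_mtPow hD q (m+2)
      _ = mtPow D (m+2) i (p (m+1)) := by rw [hq0, hqlast]
      _ = mtPow D (m+2) i l := by rw [hpk]

lemma prod_range_rot (g : ℕ → ℝ) {k s : ℕ} (hs : s < k) :
    ∏ t ∈ Finset.range k, g ((s + t) % k) = ∏ t ∈ Finset.range k, g t := by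
  have hk : 0 < k := lt_of_le_of_lt (Nat.zero_le s) hs
  apply Finset.prod_nbij' (i := fun t => (s + t) % k) (j := fun t => (t + (k - s)) % k)
  · intro a ha; exact Finset.mem_range.mpr (Nat.mod_lt _ hk)
  · intro a ha; exact Finset.mem_range.mpr (Nat.mod_lt _ hk)
  · intro a ha
    simp only [Finset.mem_range] at ha
    rw [Nat.mod_add_mod, show s + a + (k - s) = a + k by omega, Nat.add_mod_right,
      Nat.mod_eq_of_lt ha]
  · intro a ha
    simp only [Finset.mem_range] at ha
    rw [Nat.add_comm s, Nat.mod_add_mod, show a + (k - s) + s = a + k by omega,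
      Nat.add_mod_right, Nat.mod_eq_of_lt ha]
  · intro a _; rfl

/-- pigeonhole: `D^{⊗n} ≤ D^*` provided every cycle of length `≤ n` has weight `≤ 1`. -/
lemma mtPow_n_le_mtStar {D : Matrix (Fin n) (Fin n) ℝ} (hD : ∀ i j, 0 ≤ D i j)
    (hcyc : ∀ k, 1 ≤ k → k ≤ n → ∀ p : ℕ → Fin n, p k = p 0 → ppow D p k ≤ 1)
    (i j : Fin n) : mtPow D n i j ≤ mtStar D i j := by
  obtain ⟨m, hm⟩ : ∃ m, n = m + 1 := ⟨n - 1, by have := npos (n := n); omega⟩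
  obtain ⟨p, hp0, hpn, hple⟩ := mtPow_le_ppow hD m i j
  rw [← hm] at hpn hple
  obtain ⟨a, b, hab, hpab⟩ :=
    Fintype.exists_ne_map_eq_of_card_lt (fun t : Fin (n+1) => p (t : ℕ)) (by simp)
  -- wlog a < b
  obtain ⟨av, bv, havb, hvb, hpeq⟩ : ∃ av bv, av < bv ∧ bv ≤ n ∧ p av = p bv := by
    rcases lt_or_gt_of_ne hab with h | h
    · exact ⟨a, b, h, Nat.lt_succ_iff.mp b.isLt, hpab⟩
    · exact ⟨b, a, h, Nat.lt_succ_iff.mp a.isLt, hpab.symm⟩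
  set d := bv - av with hd
  have hd1 : 1 ≤ d := by omega
  set m' := n - d with hm'
  set q : ℕ → Fin n := fun t => if t < av then p t else p (t + d) with hqdef
  have hedge : ∀ t, D (q t) (q (t+1)) =
      if t < av then D (p t) (p (t+1)) else D (p (t + d)) (p (t + 1 + d)) := by
    intro t
    rcases lt_or_ge t av with h | h
    · rw [if_pos h]
      have h1 : q t = p t := if_pos h
      rcases lt_or_ge (t+1) av with h2 | h2
      · rw [h1, show q (t+1) = p (t+1) from if_pos h2]
      · have h3 : t + 1 = av := by omega
        have : q (t+1) = p (t + 1 + d) := if_neg (by omega)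
        rw [h1, this, show t + 1 + d = bv by omega, ← hpeq, ← h3]
    · rw [if_neg (by omega)]
      have h1 : q t = p (t + d) := if_neg (by omega)
      have h2 : q (t+1) = p (t + 1 + d) := if_neg (by omega)
      rw [h1, h2]
  have hX : ppow D p n =
      (∏ t ∈ Finset.range av, D (p t) (p (t+1))) *
      ((∏ t ∈ Finset.range d, D (p (av + t)) (p (av + t + 1))) *
       (∏ t ∈ Finset.range (n - bv), D (p (bv + t)) (p (bv + t + 1)))) := by
    rw [ppow]
    conv_lhs => rw [show n = av + (d + (n - bv)) by omega]
    rw [Finset.prod_range_add, Finset.prod_range_add]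
    congr 1
    congr 1
    apply Finset.prod_congr rfl
    intro t _
    rw [show av + (d + t) = bv + t by omega]
  have hQ : ppow D q m' =
      (∏ t ∈ Finset.range av, D (p t) (p (t+1))) *
      (∏ t ∈ Finset.range (n - bv), D (p (bv + t)) (p (bv + t + 1))) := by
    rw [ppow, show m' = av + (n - bv) by omega, Finset.prod_range_add]
    congr 1
    · apply Finset.prod_congr rfl
      intro t ht
      simp only [Finset.mem_range] at ht
      rw [hedge t, if_pos ht]
    · apply Finset.prod_congr rfl
      intro t _
      rw [hedge (av + t), if_neg (by omega), show av + t + d = bv + t by omega,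
        show av + t + 1 + d = bv + t + 1 by omega]
  have hMid : (∏ t ∈ Finset.range d, D (p (av + t)) (p (av + t + 1))) ≤ 1 := by
    have := hcyc d hd1 (by omega) (fun t => p (av + t)) (by
      show p (av + d) = p (av + 0)
      rw [show av + d = bv by omega, Nat.add_zero, hpeq])
    rw [ppow] at this
    exact this
  have hXY : ppow D p n ≤ ppow D q m' := by
    rw [hX, hQ]
    have h1 : 0 ≤ ∏ t ∈ Finset.range av, D (p t) (p (t+1)) :=
      Finset.prod_nonneg fun _ _ => hD _ _
    have h2 : 0 ≤ ∏ t ∈ Finset.range (n - bv), D (p (bv + t)) (p (bv + t + 1)) :=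
      Finset.prod_nonneg fun _ _ => hD _ _
    calc _ ≤ (∏ t ∈ Finset.range av, D (p t) (p (t+1))) *
        (1 * (∏ t ∈ Finset.range (n - bv), D (p (bv + t)) (p (bv + t + 1)))) := by
          apply mul_le_mul_of_nonneg_left _ h1
          exact mul_le_mul_of_nonneg_right hMid h2
      _ = _ := by ring
  have hq0 : q 0 = i := by
    rcases Nat.eq_zero_or_pos av with h | h
    · have : q 0 = p (0 + d) := if_neg (by omega)
      rw [this, show 0 + d = bv by omega, ← hpeq, show av = 0 from h, hp0]
    · rw [show q 0 = p 0 from if_pos h, hp0]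
  have hqm : q m' = j := by
    have : q m' = p (m' + d) := if_neg (by omega)
    rw [this, show m' + d = n by omega, hpn]
  calc mtPow D n i j ≤ ppow D p n := hple
    _ ≤ ppow D q m' := hXY
    _ ≤ mtPow D m' (q 0) (q m') := ppow_le_mtPow hD q m'
    _ = mtPow D m' i j := by rw [hq0, hqm]
    _ ≤ mtStar D i j := mtPow_le_mtStar (by omega) i j

end MTAux2
section MTAux3

open Finset

variable {n : ℕ} [NeZero n]

lemma mtChain_succ (A C : Matrix (Fin n) (Fin n) ℝ) (k : ℕ) (f : Fin (k+1) → ℕ) :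
    mtChain A C (k+1) f =
      mtMul (mtMul A (mtPow C (f 0))) (mtChain A C k (fun t => f t.succ)) := rfl

lemma mtChain_zero_apply (A C : Matrix (Fin n) (Fin n) ℝ) (f : Fin 0 → ℕ) (i j : Fin n) :
    mtChain A C 0 f i j = if i = j then 1 else 0 := rfl

lemma mtChain_nonneg {A C : Matrix (Fin n) (Fin n) ℝ} (hA : ∀ i j, 0 ≤ A i j)
    (hC : ∀ i j, 0 ≤ C i j) : ∀ k (f : Fin k → ℕ) (i j : Fin n), 0 ≤ mtChain A C k f i j := by
  intro k
  induction k with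
  | zero => intro f i j; rw [mtChain_zero_apply]; split <;> norm_num
  | succ k ih =>
      intro f i j
      rw [mtChain_succ]
      exact mtMul_nonneg (mtMul_nonneg hA (mtPow_nonneg hC (f 0))) (ih _) i j

/-- bound on entries: any entry is at most `max 1 (sum of all entries)` -/
lemma entry_le_bigM {A : Matrix (Fin n) (Fin n) ℝ} (hA : ∀ i j, 0 ≤ A i j) (i j : Fin n) :
    A i j ≤ max 1 (∑ a, ∑ b, A a b) := by
  refine le_trans ?_ (le_max_right _ _)
  calc A i j ≤ ∑ b, A i b := Finset.single_le_sum (fun b _ => hA i b) (Finset.mem_univ j)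
    _ ≤ ∑ a, ∑ b, A a b :=
        Finset.single_le_sum (fun a _ => Finset.sum_nonneg fun b _ => hA a b) (Finset.mem_univ i)

lemma one_le_bigM (A : Matrix (Fin n) (Fin n) ℝ) : (1:ℝ) ≤ max 1 (∑ a, ∑ b, A a b) :=
  le_max_left _ _

lemma mtPow_le_bound {C : Matrix (Fin n) (Fin n) ℝ} (hC : ∀ i j, 0 ≤ C i j) :
    ∀ m (i j : Fin n), mtPow C m i j ≤ (max 1 (∑ a, ∑ b, C a b)) ^ m := by
  set MC := max 1 (∑ a, ∑ b, C a b) with hMC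
  have hMC0 : (0:ℝ) ≤ MC := le_trans zero_le_one (one_le_bigM C)
  intro m
  induction m with
  | zero => intro i j; rw [mtPow_zero_apply, pow_zero]; split <;> norm_num
  | succ m ih =>
      intro i j
      apply mtMul_le
      intro l
      rw [pow_succ]
      exact mul_le_mul (ih i l) (entry_le_bigM hC l j) (hC l j) (pow_nonneg hMC0 m)

lemma mtChain_le_bound {A C : Matrix (Fin n) (Fin n) ℝ} (hA : ∀ i j, 0 ≤ A i j)
    (hC : ∀ i j, 0 ≤ C i j) :
    ∀ k (f : Fin k → ℕ) (i j : Fin n), mtChain A C k f i j ≤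
      (max 1 (∑ a, ∑ b, A a b)) ^ k * (max 1 (∑ a, ∑ b, C a b)) ^ (∑ t, f t) := by
  set MA := max 1 (∑ a, ∑ b, A a b) with hMA
  set MC := max 1 (∑ a, ∑ b, C a b) with hMC
  have hMA1 : (1:ℝ) ≤ MA := one_le_bigM A
  have hMC1 : (1:ℝ) ≤ MC := one_le_bigM C
  have hMA0 : (0:ℝ) ≤ MA := le_trans zero_le_one hMA1
  have hMC0 : (0:ℝ) ≤ MC := le_trans zero_le_one hMC1
  intro k
  induction k with
  | zero =>
      intro f i j
      rw [mtChain_zero_apply]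
      simp only [Finset.univ_eq_empty, Finset.sum_empty, pow_zero, mul_one]
      split <;> norm_num
  | succ k ih =>
      intro f i j
      rw [mtChain_succ]
      apply mtMul_le
      intro l
      have h1 : mtMul A (mtPow C (f 0)) i l ≤ MA * MC ^ (f 0) := by
        apply mtMul_le
        intro c
        exact mul_le_mul (entry_le_bigM hA i c) (mtPow_le_bound hC (f 0) c l)
          (mtPow_nonneg hC (f 0) c l) hMA0
      have h2 := ih (fun t => f t.succ) l j
      calc mtMul A (mtPow C (f 0)) i l * mtChain A C k (fun t => f t.succ) l j
          ≤ (MA * MC ^ (f 0)) * (MA ^ k * MC ^ (∑ t : Fin k, f t.succ)) :=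
            mul_le_mul h1 h2 (mtChain_nonneg hA hC k _ l j)
              (mul_nonneg hMA0 (pow_nonneg hMC0 _))
        _ = MA ^ (k+1) * MC ^ (f 0 + ∑ t : Fin k, f t.succ) := by ring
        _ = MA ^ (k+1) * MC ^ (∑ t, f t) := by rw [← Fin.sum_univ_succ f]

lemma specSet_nonempty (A : Matrix (Fin n) (Fin n) ℝ) :
    Set.Nonempty { r : ℝ | ∃ (k : ℕ) (hk : 0 < k), k ≤ n ∧ ∃ f : Fin k → Fin n,
      r = (∏ t : Fin k, A (f t) (f ⟨((t : ℕ) + 1) % k, Nat.mod_lt _ hk⟩)) ^ ((k : ℝ)⁻¹) } := by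
  have i0 : Fin n := ⟨0, npos⟩
  refine ⟨(A i0 i0) ^ ((1:ℝ)⁻¹), 1, one_pos, npos, fun _ => i0, ?_⟩
  norm_num

lemma bddAbove_specSet {A : Matrix (Fin n) (Fin n) ℝ} (hA : ∀ i j, 0 ≤ A i j) :
    BddAbove { r : ℝ | ∃ (k : ℕ) (hk : 0 < k), k ≤ n ∧ ∃ f : Fin k → Fin n,
      r = (∏ t : Fin k, A (f t) (f ⟨((t : ℕ) + 1) % k, Nat.mod_lt _ hk⟩)) ^ ((k : ℝ)⁻¹) } := by
  set MA := max 1 (∑ a, ∑ b, A a b) with hMA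
  have hMA1 : (1:ℝ) ≤ MA := one_le_bigM A
  refine ⟨MA ^ n, ?_⟩
  rintro r ⟨k, hk, hkn, f, rfl⟩
  have hprod0 : (0:ℝ) ≤ ∏ t : Fin k, A (f t) (f ⟨((t : ℕ) + 1) % k, Nat.mod_lt _ hk⟩) :=
    Finset.prod_nonneg fun t _ => hA _ _
  have hprod : (∏ t : Fin k, A (f t) (f ⟨((t : ℕ) + 1) % k, Nat.mod_lt _ hk⟩)) ≤ MA ^ n := by
    calc (∏ t : Fin k, A (f t) (f ⟨((t : ℕ) + 1) % k, Nat.mod_lt _ hk⟩))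
        ≤ ∏ _t : Fin k, MA := Finset.prod_le_prod (fun t _ => hA _ _)
          (fun t _ => entry_le_bigM hA _ _)
      _ = MA ^ k := by rw [Finset.prod_const, Finset.card_univ, Fintype.card_fin]
      _ ≤ MA ^ n := pow_le_pow_right₀ hMA1 hkn
  calc (∏ t : Fin k, A (f t) (f ⟨((t : ℕ) + 1) % k, Nat.mod_lt _ hk⟩)) ^ ((k : ℝ)⁻¹)
      ≤ (MA ^ n) ^ ((k : ℝ)⁻¹) := Real.rpow_le_rpow hprod0 hprod (by positivity)
    _ ≤ (MA ^ n) ^ (1:ℝ) := by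
        apply Real.rpow_le_rpow_of_exponent_le (one_le_pow₀ hMA1)
        exact inv_le_one_of_one_le₀ (Nat.one_le_cast.mpr hk)
    _ = MA ^ n := Real.rpow_one _

lemma bddAbove_TSet {A C : Matrix (Fin n) (Fin n) ℝ} (hA : ∀ i j, 0 ≤ A i j)
    (hC : ∀ i j, 0 ≤ C i j) :
    BddAbove { r : ℝ | ∃ k : ℕ, 0 < k ∧ k ≤ n - 1 ∧ ∃ f : Fin k → ℕ,
      1 ≤ ∑ t, f t ∧ (∑ t, f t) ≤ n - k ∧
      r = (⨆ i, mtChain A C k f i i) ^ ((k : ℝ)⁻¹) } := by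
  set MA := max 1 (∑ a, ∑ b, A a b) with hMA
  set MC := max 1 (∑ a, ∑ b, C a b) with hMC
  have hMA1 : (1:ℝ) ≤ MA := one_le_bigM A
  have hMC1 : (1:ℝ) ≤ MC := one_le_bigM C
  set B := MA ^ n * MC ^ n with hB
  have hB1 : (1:ℝ) ≤ B := by
    have h1 : (1:ℝ) ≤ MA ^ n := one_le_pow₀ hMA1
    have h2 : (1:ℝ) ≤ MC ^ n := one_le_pow₀ hMC1
    nlinarith
  refine ⟨B, ?_⟩
  rintro r ⟨k, hk, hkn, f, hf1, hf2, rfl⟩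
  have hsup0 : (0:ℝ) ≤ ⨆ i, mtChain A C k f i i :=
    fsup_nonneg fun i => mtChain_nonneg hA hC k f i i
  have hsup : (⨆ i, mtChain A C k f i i) ≤ B := by
    apply fsup_le
    intro i
    calc mtChain A C k f i i ≤ MA ^ k * MC ^ (∑ t, f t) := mtChain_le_bound hA hC k f i i
      _ ≤ MA ^ n * MC ^ n := by
          apply mul_le_mul (pow_le_pow_right₀ hMA1 (by omega))
            (pow_le_pow_right₀ hMC1 (by omega)) (by positivity) (by positivity)
  calc (⨆ i, mtChain A C k f i i) ^ ((k : ℝ)⁻¹)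
      ≤ B ^ ((k : ℝ)⁻¹) := Real.rpow_le_rpow hsup0 hsup (by positivity)
    _ ≤ B ^ (1:ℝ) := by
        apply Real.rpow_le_rpow_of_exponent_le hB1
        exact inv_le_one_of_one_le₀ (Nat.one_le_cast.mpr hk)
    _ = B := Real.rpow_one _

end MTAux3
section MTAux4

open Finset

variable {n : ℕ} [NeZero n]

lemma chain_decomp {A C : Matrix (Fin n) (Fin n) ℝ} (hA : ∀ i j, 0 ≤ A i j)
    (hC : ∀ i j, 0 ≤ C i j) {θ : ℝ} (hθ : 0 < θ) :
    ∀ k, 1 ≤ k → ∀ (q : ℕ → Fin n) (c : ℕ → Bool), c 0 = true →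
    ∃ (j : ℕ) (f : Fin j → ℕ), 1 ≤ j ∧ j + ∑ t, f t = k ∧
      ((∑ t, f t) = 0 → ∀ t < k, c t = true) ∧
      (∏ t ∈ Finset.range k, (if c t then θ⁻¹ * A (q t) (q (t+1)) else C (q t) (q (t+1))))
        ≤ θ⁻¹ ^ j * mtChain A C j f (q 0) (q k) := by
  intro k
  induction k using Nat.strong_induction_on with
  | _ k ih =>
  intro hk q c hc0
  classical
  set g : ℕ → ℝ := fun t => if c t then θ⁻¹ * A (q t) (q (t+1)) else C (q t) (q (t+1)) with hg
  have hg0 : ∀ t, 0 ≤ g t := fun t => by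
    simp only [hg]; split
    · have := hA (q t) (q (t+1)); positivity
    · exact hC _ _
  have hgtrue : ∀ t, c t = true → g t = θ⁻¹ * A (q t) (q (t+1)) := fun t ht => by
    simp only [hg]; rw [if_pos ht]
  have hgfalse : ∀ t, c t = false → g t = C (q t) (q (t+1)) := fun t ht => by
    simp only [hg]; rw [if_neg (by simp [ht])]
  by_cases hrest : ∃ t, 0 < t ∧ t < k ∧ c t = true
  · -- there is another A-edge at position s
    set s := Nat.find hrest with hsdef
    obtain ⟨hs0, hsk, hcs⟩ := Nat.find_spec hrest
    have hfalse : ∀ t, 0 < t → t < s → c t = false := by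
      intro t ht0 hts
      by_contra hcne
      exact (Nat.find_min hrest hts) ⟨ht0, by omega, by simpa using hcne⟩
    obtain ⟨j', f', hj'1, hsum', hall', hW'⟩ :=
      ih (k - s) (by omega) (by omega) (fun t => q (s+t)) (fun t => c (s+t)) hcs
    have hW2 : (∏ t ∈ Finset.range (k-s), g (s+t)) ≤
        θ⁻¹ ^ j' * mtChain A C j' f' (q s) (q k) := by
      rw [show s + (k-s) = k by omega] at hW'
      exact hW'
    refine ⟨j'+1, Fin.cons (s-1) f', by omega, ?_, ?_, ?_⟩
    · rw [Fin.sum_cons]; omega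
    · intro h0 t ht
      rw [Fin.sum_cons] at h0
      have hs1 : s = 1 := by omega
      have hf'0 : ∑ t, f' t = 0 := by omega
      rcases Nat.eq_zero_or_pos t with rfl | ht0
      · exact hc0
      · have h2 := hall' hf'0 (t-1) (by omega)
        rwa [hs1, show 1 + (t-1) = t by omega] at h2
    · have hsplit : ∏ t ∈ Finset.range k, g t =
          (∏ t ∈ Finset.range s, g t) * (∏ t ∈ Finset.range (k-s), g (s+t)) := by
        have h := Finset.prod_range_add g s (k-s)
        rwa [show s + (k-s) = k by omega] at h
      have hpre : ∏ t ∈ Finset.range s, g t =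
          (∏ t ∈ Finset.range (s-1), g (t+1)) * g 0 := by
        conv_lhs => rw [show s = (s-1)+1 by omega]
        exact Finset.prod_range_succ' g (s-1)
      have hCpre : ∏ t ∈ Finset.range (s-1), g (t+1) = ppow C (fun t => q (t+1)) (s-1) := by
        apply Finset.prod_congr rfl
        intro t ht
        simp only [Finset.mem_range] at ht
        rw [hgfalse (t+1) (hfalse (t+1) (by omega) (by omega))]
      have hCle : ppow C (fun t => q (t+1)) (s-1) ≤ mtPow C (s-1) (q 1) (q s) := by
        have h := ppow_le_mtPow hC (fun t => q (t+1)) (s-1)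
        rwa [show (s-1)+1 = s by omega] at h
      have hg00 : g 0 = θ⁻¹ * A (q 0) (q 1) := hgtrue 0 hc0
      calc ∏ t ∈ Finset.range k, g t
          = ((∏ t ∈ Finset.range (s-1), g (t+1)) * g 0) *
            (∏ t ∈ Finset.range (k-s), g (s+t)) := by rw [hsplit, hpre]
        _ ≤ ((mtPow C (s-1) (q 1) (q s)) * (θ⁻¹ * A (q 0) (q 1))) *
            (θ⁻¹ ^ j' * mtChain A C j' f' (q s) (q k)) := by
            apply mul_le_mul _ hW2 (Finset.prod_nonneg fun t _ => hg0 _) _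
            · rw [hCpre, hg00]
              exact mul_le_mul_of_nonneg_right hCle (by rw [← hg00]; exact hg0 0)
            · have h1 := mtPow_nonneg hC (s-1) (q 1) (q s)
              have h2 := hA (q 0) (q 1)
              positivity
        _ = θ⁻¹ ^ (j'+1) * ((A (q 0) (q 1) * mtPow C (s-1) (q 1) (q s)) *
              mtChain A C j' f' (q s) (q k)) := by ring
        _ ≤ θ⁻¹ ^ (j'+1) * ((mtMul A (mtPow C (s-1)) (q 0) (q s)) *
              mtChain A C j' f' (q s) (q k)) := by
            apply mul_le_mul_of_nonneg_left _ (by positivity)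
            exact mul_le_mul_of_nonneg_right (le_mtMul A (mtPow C (s-1)) (q 0) (q s) (q 1))
              (mtChain_nonneg hA hC j' f' _ _)
        _ ≤ θ⁻¹ ^ (j'+1) * mtChain A C (j'+1) (Fin.cons (s-1) f') (q 0) (q k) := by
            apply mul_le_mul_of_nonneg_left _ (by positivity)
            rw [mtChain_succ]
            have hcz : (Fin.cons (s-1) f' : Fin (j'+1) → ℕ) 0 = s-1 := rfl
            have hcsucc : (fun t : Fin j' => (Fin.cons (s-1) f' : Fin (j'+1) → ℕ) t.succ) = f' :=
              funext fun t => Fin.cons_succ _ _ t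
            rw [hcz, hcsucc]
            exact le_mtMul _ _ _ _ (q s)
  · -- all later edges are C-edges
    obtain ⟨k', rfl⟩ : ∃ k', k = k'+1 := ⟨k-1, by omega⟩
    have hfalse : ∀ t, 0 < t → t < k'+1 → c t = false := by
      intro t ht0 htk
      by_contra hcne
      exact hrest ⟨t, ht0, htk, by simpa using hcne⟩
    refine ⟨1, fun _ => k', le_rfl, by rw [Fin.sum_univ_one]; omega, ?_, ?_⟩
    · intro h0 t ht
      rw [Fin.sum_univ_one] at h0
      have : t = 0 := by omega
      subst this
      exact hc0
    · have hsplit : ∏ t ∈ Finset.range (k'+1), g t =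
          (∏ t ∈ Finset.range k', g (t+1)) * g 0 := Finset.prod_range_succ' g k'
      have hCpre : ∏ t ∈ Finset.range k', g (t+1) = ppow C (fun t => q (t+1)) k' := by
        apply Finset.prod_congr rfl
        intro t ht
        simp only [Finset.mem_range] at ht
        rw [hgfalse (t+1) (hfalse (t+1) (by omega) (by omega))]
      have hCle : ppow C (fun t => q (t+1)) k' ≤ mtPow C k' (q 1) (q (k'+1)) :=
        ppow_le_mtPow hC (fun t => q (t+1)) k'
      have hg00 : g 0 = θ⁻¹ * A (q 0) (q 1) := hgtrue 0 hc0
      calc ∏ t ∈ Finset.range (k'+1), g t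
          = (∏ t ∈ Finset.range k', g (t+1)) * g 0 := hsplit
        _ ≤ mtPow C k' (q 1) (q (k'+1)) * (θ⁻¹ * A (q 0) (q 1)) := by
            rw [hCpre, hg00]
            exact mul_le_mul_of_nonneg_right hCle (by rw [← hg00]; exact hg0 0)
        _ = θ⁻¹ ^ 1 * (A (q 0) (q 1) * mtPow C k' (q 1) (q (k'+1))) := by ring
        _ ≤ θ⁻¹ ^ 1 * mtMul A (mtPow C k') (q 0) (q (k'+1)) := by
            apply mul_le_mul_of_nonneg_left _ (by positivity)
            exact le_mtMul A (mtPow C k') (q 0) (q (k'+1)) (q 1)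
        _ ≤ θ⁻¹ ^ 1 * mtChain A C 1 (fun _ => k') (q 0) (q (k'+1)) := by
            apply mul_le_mul_of_nonneg_left _ (by positivity)
            rw [mtChain_succ]
            have h := le_mtMul (mtMul A (mtPow C ((fun _ : Fin 1 => k') 0)))
              (mtChain A C 0 (fun t => (fun _ : Fin 1 => k') t.succ)) (q 0) (q (k'+1)) (q (k'+1))
            rw [mtChain_zero_apply, if_pos rfl, mul_one] at h
            exact h
end MTAux4
section MTAux5

open Finset

variable {n : ℕ} [NeZero n]

lemma spec_le_theta (A C : Matrix (Fin n) (Fin n) ℝ) : mtSpecRad A ≤ mtTheta A C :=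
  le_max_left _ _

lemma Tsup_le_theta (A C : Matrix (Fin n) (Fin n) ℝ) :
    sSup { r : ℝ | ∃ k : ℕ, 0 < k ∧ k ≤ n - 1 ∧ ∃ f : Fin k → ℕ,
      1 ≤ ∑ t, f t ∧ (∑ t, f t) ≤ n - k ∧
      r = (⨆ i, mtChain A C k f i i) ^ ((k : ℝ)⁻¹) } ≤ mtTheta A C :=
  le_max_right _ _

lemma Dcycle_le_one {A C D : Matrix (Fin n) (Fin n) ℝ} {θ : ℝ}
    (hA : ∀ i j, 0 ≤ A i j) (hC : ∀ i j, 0 ≤ C i j)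
    (hTr : ∀ k : ℕ, 1 ≤ k → k ≤ n → ∀ i, mtPow C k i i ≤ 1)
    (hθpos : 0 < θ) (hθ : θ = mtTheta A C)
    (hD : ∀ i j, D i j = max (θ⁻¹ * A i j) (C i j)) :
    ∀ k, 1 ≤ k → k ≤ n → ∀ p : ℕ → Fin n, p k = p 0 → ppow D p k ≤ 1 := by
  intro k hk1 hkn p hcyc
  classical
  set c : ℕ → Bool := fun t => decide (C (p t) (p (t+1)) ≤ θ⁻¹ * A (p t) (p (t+1))) with hcdef
  set gD : ℕ → ℝ :=
    fun u => if c u then θ⁻¹ * A (p u) (p (u+1)) else C (p u) (p (u+1)) with hgDdef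
  have hDedge : ∀ t, D (p t) (p (t+1)) = gD t := by
    intro t
    rw [hD]
    by_cases h : C (p t) (p (t+1)) ≤ θ⁻¹ * A (p t) (p (t+1))
    · simp only [hgDdef, hcdef]
      rw [if_pos (by simpa using h), max_eq_left h]
    · simp only [hgDdef, hcdef]
      rw [if_neg (by simpa using h), max_eq_right (le_of_not_ge h)]
  have hppow : ppow D p k = ∏ u ∈ Finset.range k, gD u :=
    Finset.prod_congr rfl fun u _ => hDedge u
  by_cases hallA : ∀ t < k, c t = true
  · -- pure A-cycle: use the spectral radius bound
    set P := ∏ u ∈ Finset.range k, A (p u) (p (u+1)) with hPdef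
    have hsplit : ∏ u ∈ Finset.range k, gD u = θ⁻¹ ^ k * P := by
      calc ∏ u ∈ Finset.range k, gD u
          = ∏ u ∈ Finset.range k, (θ⁻¹ * A (p u) (p (u+1))) :=
            Finset.prod_congr rfl fun u hu => if_pos (hallA u (Finset.mem_range.mp hu))
        _ = θ⁻¹ ^ k * P := by
            rw [Finset.prod_mul_distrib, Finset.prod_const, Finset.card_range]
    have hkpos : 0 < k := hk1
    have hfin : (∏ t : Fin k, A (p (t : ℕ)) (p (((t : ℕ) + 1) % k))) = P := by
      rw [hPdef, ← Fin.prod_univ_eq_prod_range (fun u => A (p u) (p (u+1))) k]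
      apply Finset.prod_congr rfl
      intro t _
      rcases eq_or_lt_of_le (Nat.succ_le_of_lt t.isLt) with h | h
      · have ht1 : (t : ℕ) + 1 = k := by omega
        calc A (p (t : ℕ)) (p (((t : ℕ) + 1) % k))
            = A (p (t : ℕ)) (p (k % k)) := by rw [ht1]
          _ = A (p (t : ℕ)) (p 0) := by rw [Nat.mod_self]
          _ = A (p (t : ℕ)) (p k) := by rw [hcyc]
          _ = A (p (t : ℕ)) (p ((t : ℕ) + 1)) := by rw [ht1]
      · rw [Nat.mod_eq_of_lt h]
    have hmem : P ^ ((k : ℝ)⁻¹) ∈ { r : ℝ | ∃ (k : ℕ) (hk : 0 < k), k ≤ n ∧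
        ∃ f : Fin k → Fin n,
        r = (∏ t : Fin k, A (f t) (f ⟨((t : ℕ) + 1) % k, Nat.mod_lt _ hk⟩)) ^ ((k : ℝ)⁻¹) } :=
      ⟨k, hkpos, hkn, fun t => p (t : ℕ), by rw [hfin]⟩
    have hrθ : P ^ ((k : ℝ)⁻¹) ≤ θ := by
      refine le_trans (le_trans (le_csSup (bddAbove_specSet hA) hmem) ?_) (hθ ▸ spec_le_theta A C)
      exact le_rfl
    have hP0 : (0:ℝ) ≤ P := Finset.prod_nonneg fun u _ => hA _ _
    have hPθ : P ≤ θ ^ k := by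
      have h := pow_le_pow_left₀ (Real.rpow_nonneg hP0 _) hrθ k
      rwa [Real.rpow_inv_natCast_pow hP0 (by omega)] at h
    calc ppow D p k = θ⁻¹ ^ k * P := by rw [hppow, hsplit]
      _ ≤ θ⁻¹ ^ k * θ ^ k := mul_le_mul_of_nonneg_left hPθ (by positivity)
      _ = 1 := by rw [← mul_pow, inv_mul_cancel₀ (ne_of_gt hθpos), one_pow]
  · by_cases hallC : ∀ t < k, c t = false
    · -- pure C-cycle
      have hCc : ∏ u ∈ Finset.range k, gD u = ppow C p k := by
        apply Finset.prod_congr rfl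
        intro u hu
        exact if_neg (by simp [hallC u (Finset.mem_range.mp hu)])
      calc ppow D p k = ppow C p k := by rw [hppow, hCc]
        _ ≤ mtPow C k (p 0) (p k) := ppow_le_mtPow hC p k
        _ = mtPow C k (p 0) (p 0) := by rw [hcyc]
        _ ≤ 1 := hTr k hk1 hkn (p 0)
    · -- mixed cycle
      push_neg at hallA hallC
      obtain ⟨t1, ht1k, ht1⟩ := hallA
      obtain ⟨s, hsk, hcs'⟩ := hallC
      have ht1f : c t1 = false := by
        cases h : c t1
        · rfl
        · exact absurd h ht1
      have hcs : c s = true := by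
        cases h : c s
        · exact absurd h hcs'
        · rfl
      set q : ℕ → Fin n := fun t => p ((s + t) % k) with hqdef
      set c' : ℕ → Bool := fun t => c ((s + t) % k) with hc'def
      have hs' : s % k = s := Nat.mod_eq_of_lt hsk
      have hc'0 : c' 0 = true := by
        show c ((s + 0) % k) = true
        rw [show s + 0 = s from rfl, hs']
        exact hcs
      have hq1 : ∀ t, q (t+1) = p ((s + t) % k + 1) := by
        intro t
        show p ((s + (t+1)) % k) = p ((s + t) % k + 1)
        have hu : (s + t) % k < k := Nat.mod_lt _ (by omega)
        have h2 : (s + (t+1)) % k = ((s + t) % k + 1) % k := by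
          rw [Nat.mod_add_mod, Nat.add_assoc]
        rcases eq_or_lt_of_le (Nat.succ_le_of_lt hu) with h | h
        · have h' : (s + t) % k + 1 = k := by omega
          calc p ((s + (t+1)) % k) = p (((s + t) % k + 1) % k) := by rw [h2]
            _ = p (k % k) := by rw [h']
            _ = p 0 := by rw [Nat.mod_self]
            _ = p k := hcyc.symm
            _ = p ((s + t) % k + 1) := by rw [h']
        · rw [h2, Nat.mod_eq_of_lt h]
      have hedge : ∀ t, gD ((s + t) % k) =
          (if c' t then θ⁻¹ * A (q t) (q (t+1)) else C (q t) (q (t+1))) := by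
        intro t
        rw [show q (t+1) = p ((s + t) % k + 1) from hq1 t]
      have hrot : ppow D p k = ∏ t ∈ Finset.range k,
          (if c' t then θ⁻¹ * A (q t) (q (t+1)) else C (q t) (q (t+1))) := by
        rw [hppow, ← prod_range_rot gD hsk]
        exact Finset.prod_congr rfl fun t _ => hedge t
      obtain ⟨j, f, hj1, hjsum, hall, hW⟩ := chain_decomp hA hC hθpos k hk1 q c' hc'0
      have hfnz : ∑ t, f t ≠ 0 := by
        intro h0
        have hmlt : (t1 + (k - s)) % k < k := Nat.mod_lt _ (by omega)
        have h1 := hall h0 ((t1 + (k - s)) % k) hmlt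
        have he : (s + (t1 + (k - s)) % k) % k = t1 := by
          rw [Nat.add_comm s, Nat.mod_add_mod, show t1 + (k - s) + s = t1 + k by omega,
            Nat.add_mod_right, Nat.mod_eq_of_lt ht1k]
        rw [show c' ((t1 + (k - s)) % k) = c ((s + (t1 + (k - s)) % k) % k) from rfl, he,
          ht1f] at h1
        exact Bool.false_ne_true h1
      have hqk : q k = q 0 := by
        show p ((s + k) % k) = p ((s + 0) % k)
        rw [Nat.add_mod_right, show s + 0 = s from rfl]
      have hmem : ((⨆ i, mtChain A C j f i i) ^ ((j : ℝ)⁻¹)) ∈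
          { r : ℝ | ∃ k : ℕ, 0 < k ∧ k ≤ n - 1 ∧ ∃ f : Fin k → ℕ,
            1 ≤ ∑ t, f t ∧ (∑ t, f t) ≤ n - k ∧
            r = (⨆ i, mtChain A C k f i i) ^ ((k : ℝ)⁻¹) } :=
        ⟨j, hj1, by omega, f, by omega, by omega, rfl⟩
      have hrθ : ((⨆ i, mtChain A C j f i i) ^ ((j : ℝ)⁻¹)) ≤ θ := by
        refine le_trans (le_csSup (bddAbove_TSet hA hC) hmem) (hθ ▸ Tsup_le_theta A C)
      have hsup0 : (0:ℝ) ≤ ⨆ i, mtChain A C j f i i :=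
        fsup_nonneg fun i => mtChain_nonneg hA hC j f i i
      have hsupθ : (⨆ i, mtChain A C j f i i) ≤ θ ^ j := by
        have h := pow_le_pow_left₀ (Real.rpow_nonneg hsup0 _) hrθ j
        rwa [Real.rpow_inv_natCast_pow hsup0 (by omega)] at h
      calc ppow D p k
          = ∏ t ∈ Finset.range k,
            (if c' t then θ⁻¹ * A (q t) (q (t+1)) else C (q t) (q (t+1))) := hrot
        _ ≤ θ⁻¹ ^ j * mtChain A C j f (q 0) (q k) := hW
        _ ≤ θ⁻¹ ^ j * (⨆ i, mtChain A C j f i i) := by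
            apply mul_le_mul_of_nonneg_left _ (by positivity)
            rw [hqk]
            exact fle (fun i => mtChain A C j f i i) (q 0)
        _ ≤ θ⁻¹ ^ j * θ ^ j := mul_le_mul_of_nonneg_left hsupθ (by positivity)
        _ = 1 := by rw [← mul_pow, inv_mul_cancel₀ (ne_of_gt hθpos), one_pow]

end MTAux5
section MTAux6

open Finset

variable {n : ℕ} [NeZero n]

lemma div_chain {a b c : ℝ} (hb : b ≠ 0) : a / b * (b / c) = a / c := by
  field_simp

lemma mtPow_ratio {C : Matrix (Fin n) (Fin n) ℝ} (hC : ∀ i j, 0 ≤ C i j)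
    {x : Fin n → ℝ} (hx : ∀ i, 0 < x i) (hCx : ∀ i j, C i j * x j ≤ x i) :
    ∀ m (i j : Fin n), mtPow C m i j ≤ x i / x j := by
  have hCr : ∀ i j, C i j ≤ x i / x j := by
    intro i j; rw [le_div_iff₀ (hx j)]; exact hCx i j
  intro m
  induction m with
  | zero =>
      intro i j; rw [mtPow_zero_apply]
      split
      · next h => subst h; rw [div_self (ne_of_gt (hx i))]
      · exact (div_pos (hx i) (hx j)).le
  | succ m ih =>
      intro i j
      apply mtMul_le
      intro l
      calc mtPow C m i l * C l j ≤ (x i / x l) * (x l / x j) :=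
            mul_le_mul (ih i l) (hCr l j) (hC l j) (div_pos (hx i) (hx l)).le
        _ = x i / x j := div_chain (hx l).ne'
  
lemma mtChain_ratio {A C : Matrix (Fin n) (Fin n) ℝ} (hA : ∀ i j, 0 ≤ A i j)
    (hC : ∀ i j, 0 ≤ C i j) {x : Fin n → ℝ} {s : ℝ} (hx : ∀ i, 0 < x i) (hs0 : 0 ≤ s)
    (hAr : ∀ i j, A i j ≤ s * (x i / x j)) (hCx : ∀ i j, C i j * x j ≤ x i) :
    ∀ k (f : Fin k → ℕ) (i j : Fin n), mtChain A C k f i j ≤ s ^ k * (x i / x j) := by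
  intro k
  induction k with
  | zero =>
      intro f i j; rw [mtChain_zero_apply, pow_zero, one_mul]
      split
      · next h => subst h; rw [div_self (ne_of_gt (hx i))]
      · exact (div_pos (hx i) (hx j)).le
  | succ k ih =>
      intro f i j
      rw [mtChain_succ]
      apply mtMul_le
      intro l
      have h1 : mtMul A (mtPow C (f 0)) i l ≤ s * (x i / x l) := by
        apply mtMul_le
        intro cc
        calc A i cc * mtPow C (f 0) cc l ≤ (s * (x i / x cc)) * (x cc / x l) :=
              mul_le_mul (hAr i cc) (mtPow_ratio hC hx hCx (f 0) cc l)
                (mtPow_nonneg hC (f 0) cc l) (mul_nonneg hs0 (div_pos (hx i) (hx cc)).le)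
          _ = s * (x i / x l) := by rw [mul_assoc, div_chain (hx cc).ne']
      calc mtMul A (mtPow C (f 0)) i l * mtChain A C k (fun t => f t.succ) l j
          ≤ (s * (x i / x l)) * (s ^ k * (x l / x j)) :=
            mul_le_mul h1 (ih _ l j) (mtChain_nonneg hA hC k _ l j)
              (mul_nonneg hs0 (div_pos (hx i) (hx l)).le)
        _ = (s * s ^ k) * ((x i / x l) * (x l / x j)) := by ring
        _ = s ^ (k+1) * (x i / x j) := by rw [div_chain (hx l).ne']; ring

lemma theta_le_sup {A C : Matrix (Fin n) (Fin n) ℝ} (hA : ∀ i j, 0 ≤ A i j)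
    (hC : ∀ i j, 0 ≤ C i j) {x : Fin n → ℝ} (hx : ∀ i, 0 < x i)
    (hCx : ∀ i j, C i j * x j ≤ x i) :
    mtTheta A C ≤ ⨆ p : Fin n × Fin n, A p.1 p.2 * x p.2 / x p.1 := by
  set s := ⨆ p : Fin n × Fin n, A p.1 p.2 * x p.2 / x p.1 with hsdef
  have i0 : Fin n := ⟨0, npos⟩
  have hs0 : 0 ≤ s := by
    refine le_trans ?_ (fle (fun p : Fin n × Fin n => A p.1 p.2 * x p.2 / x p.1) (i0, i0))
    exact div_nonneg (mul_nonneg (hA i0 i0) (hx i0).le) (hx i0).le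
  have hAs : ∀ i j, A i j * x j ≤ s * x i := by
    intro i j
    have h := fle (fun p : Fin n × Fin n => A p.1 p.2 * x p.2 / x p.1) (i, j)
    rw [div_le_iff₀ (hx i)] at h
    exact h
  have hAr : ∀ i j, A i j ≤ s * (x i / x j) := by
    intro i j
    rw [mul_div_assoc', le_div_iff₀ (hx j)]
    exact hAs i j
  apply max_le
  · apply csSup_le (specSet_nonempty A)
    rintro r ⟨k, hk, hkn, f, rfl⟩
    have hσinj : Function.Injective
        (fun t : Fin k => (⟨((t : ℕ) + 1) % k, Nat.mod_lt _ hk⟩ : Fin k)) := by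
      intro a b hab
      have h' : ((a : ℕ) + 1) % k = ((b : ℕ) + 1) % k := congrArg Fin.val hab
      have ea : ((a : ℕ) + 1) % k = (if (a : ℕ) + 1 = k then 0 else (a : ℕ) + 1) := by
        split
        · next h => rw [h, Nat.mod_self]
        · next h => exact Nat.mod_eq_of_lt (by have := a.isLt; omega)
      have eb : ((b : ℕ) + 1) % k = (if (b : ℕ) + 1 = k then 0 else (b : ℕ) + 1) := by
        split
        · next h => rw [h, Nat.mod_self]
        · next h => exact Nat.mod_eq_of_lt (by have := b.isLt; omega)
      rw [ea, eb] at h'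
      apply Fin.ext
      split_ifs at h' <;> omega
    have hσbij := Finite.injective_iff_bijective.mp hσinj
    have htel : ∏ t : Fin k, x (f (⟨((t : ℕ) + 1) % k, Nat.mod_lt _ hk⟩ : Fin k)) =
        ∏ t : Fin k, x (f t) := Function.Bijective.prod_comp hσbij (fun t => x (f t))
    have hxpos : (0:ℝ) < ∏ t : Fin k, x (f t) := Finset.prod_pos fun t _ => hx (f t)
    have hprod : (∏ t : Fin k, A (f t) (f ⟨((t : ℕ) + 1) % k, Nat.mod_lt _ hk⟩)) ≤ s ^ k := by
      have h1 : (∏ t : Fin k, A (f t) (f ⟨((t : ℕ) + 1) % k, Nat.mod_lt _ hk⟩)) ≤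
          ∏ t : Fin k, (s * (x (f t) / x (f ⟨((t : ℕ) + 1) % k, Nat.mod_lt _ hk⟩))) :=
        Finset.prod_le_prod (fun t _ => hA _ _) (fun t _ => hAr _ _)
      have h2 : ∏ t : Fin k, (s * (x (f t) / x (f ⟨((t : ℕ) + 1) % k, Nat.mod_lt _ hk⟩))) =
          s ^ k * ((∏ t : Fin k, x (f t)) /
            (∏ t : Fin k, x (f ⟨((t : ℕ) + 1) % k, Nat.mod_lt _ hk⟩))) := by
        rw [Finset.prod_mul_distrib, Finset.prod_const, Finset.card_univ, Fintype.card_fin,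
          Finset.prod_div_distrib]
      rw [h2, htel, div_self (ne_of_gt hxpos), mul_one] at h1
      exact h1
    have hp0 : (0:ℝ) ≤ ∏ t : Fin k, A (f t) (f ⟨((t : ℕ) + 1) % k, Nat.mod_lt _ hk⟩) :=
      Finset.prod_nonneg fun t _ => hA _ _
    calc (∏ t : Fin k, A (f t) (f ⟨((t : ℕ) + 1) % k, Nat.mod_lt _ hk⟩)) ^ ((k : ℝ)⁻¹)
        ≤ (s ^ k) ^ ((k : ℝ)⁻¹) := Real.rpow_le_rpow hp0 hprod (by positivity)
      _ = s := Real.pow_rpow_inv_natCast hs0 (by omega)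
  · apply Real.sSup_le _ hs0
    rintro r ⟨k, hk, hkn1, f, hf1, hf2, rfl⟩
    have hsup : (⨆ i, mtChain A C k f i i) ≤ s ^ k := by
      apply fsup_le
      intro i
      have h := mtChain_ratio hA hC hx hs0 hAr hCx k f i i
      rwa [div_self (ne_of_gt (hx i)), mul_one] at h
    have hsup0 : (0:ℝ) ≤ ⨆ i, mtChain A C k f i i :=
      fsup_nonneg fun i => mtChain_nonneg hA hC k f i i
    calc (⨆ i, mtChain A C k f i i) ^ ((k : ℝ)⁻¹)
        ≤ (s ^ k) ^ ((k : ℝ)⁻¹) := Real.rpow_le_rpow hsup0 hsup (by positivity)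
      _ = s := Real.pow_rpow_inv_natCast hs0 (by omega)

lemma star_fixpoint {D : Matrix (Fin n) (Fin n) ℝ} (hD : ∀ i j, 0 ≤ D i j)
    {x : Fin n → ℝ} (hx : ∀ i, 0 < x i) (hDx : ∀ i j, D i j * x j ≤ x i) :
    mtVecMul (mtStar D) x = x := by
  have hpow : ∀ m (i j : Fin n), mtPow D m i j * x j ≤ x i := by
    intro m
    induction m with
    | zero =>
        intro i j; rw [mtPow_zero_apply]
        split
        · next h => subst h; rw [one_mul]
        · rw [zero_mul]; exact (hx i).le
    | succ m ih =>
        intro i j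
        rw [show mtPow D (m+1) i j = ⨆ l, mtPow D m i l * D l j from rfl,
          Real.iSup_mul_of_nonneg (hx j).le]
        apply fsup_le
        intro l
        calc mtPow D m i l * D l j * x j = mtPow D m i l * (D l j * x j) := by ring
          _ ≤ mtPow D m i l * x l := mul_le_mul_of_nonneg_left (hDx l j) (mtPow_nonneg hD m i l)
          _ ≤ x i := ih i l
  funext i
  apply le_antisymm
  · apply fsup_le
    intro j
    rw [mtStar_apply, Real.iSup_mul_of_nonneg (hx j).le]
    apply fsup_le
    intro m
    exact hpow (m : ℕ) i j
  · calc x i = 1 * x i := (one_mul _).symm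
      _ ≤ mtStar D i i * x i :=
          mul_le_mul_of_nonneg_right (one_le_mtStar_diag D i) (hx i).le
      _ ≤ ⨆ j, mtStar D i j * x j := fle (fun j => mtStar D i j * x j) i

lemma star_vec_invariant {D : Matrix (Fin n) (Fin n) ℝ} (hD : ∀ i j, 0 ≤ D i j)
    (hcyc : ∀ k, 1 ≤ k → k ≤ n → ∀ p : ℕ → Fin n, p k = p 0 → ppow D p k ≤ 1)
    {u : Fin n → ℝ} (hu : ∀ i, 0 < u i) :
    ∀ i j, D i j * (mtVecMul (mtStar D) u) j ≤ (mtVecMul (mtStar D) u) i := by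
  intro i j
  show D i j * (⨆ l, mtStar D j l * u l) ≤ ⨆ l, mtStar D i l * u l
  rw [Real.mul_iSup_of_nonneg (hD i j)]
  apply fsup_le
  intro l
  rw [mtStar_apply D j l, Real.iSup_mul_of_nonneg (hu l).le,
    Real.mul_iSup_of_nonneg (hD i j)]
  apply fsup_le
  intro m
  have hpowle : mtPow D ((m : ℕ)+1) i l ≤ mtStar D i l := by
    rcases lt_or_eq_of_le (Nat.succ_le_of_lt m.isLt) with h | h
    · exact mtPow_le_mtStar h i l
    · have h' : (m : ℕ) + 1 = n := by omega
      rw [h']; exact mtPow_n_le_mtStar hD hcyc i l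
  calc D i j * (mtPow D (m : ℕ) j l * u l) = (D i j * mtPow D (m : ℕ) j l) * u l := by ring
    _ ≤ mtPow D ((m : ℕ)+1) i l * u l :=
        mul_le_mul_of_nonneg_right (mul_mtPow_le hD (m : ℕ) i j l) (hu l).le
    _ ≤ mtStar D i l * u l := mul_le_mul_of_nonneg_right hpowle (hu l).le
    _ ≤ ⨆ l, mtStar D i l * u l := fle (fun l => mtStar D i l * u l) l

end MTAux6
/-- A positive vector `x` is a minimizer of the constrained problem
(i.e. satisfies `C ⊗ x ≤ x` and attains the value `θ`) iff `x = D^* ⊗ u` for some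
positive `u`, where `D_{ij} = max(θ⁻¹ A_{ij}, C_{ij})`. -/
theorem mt_constrained_minimizers {n : ℕ} (hn : 1 ≤ n) (A C : Matrix (Fin n) (Fin n) ℝ)
    (hA : ∀ i j, 0 ≤ A i j) (hC : ∀ i j, 0 ≤ C i j)
    (hlam : 0 < mtSpecRad A)
    (hTr : ∀ k : ℕ, 1 ≤ k → k ≤ n → ∀ i, mtPow C k i i ≤ 1)
    (θ : ℝ) (hθ : θ = mtTheta A C)
    (D : Matrix (Fin n) (Fin n) ℝ) (hD : ∀ i j, D i j = max (θ⁻¹ * A i j) (C i j))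
    (x : Fin n → ℝ) (hx : ∀ i, 0 < x i) :
    ((∀ i, (⨆ j, C i j * x j) ≤ x i) ∧
        (⨆ p : Fin n × Fin n, A p.1 p.2 * x p.2 / x p.1) = θ) ↔
      ∃ u : Fin n → ℝ, (∀ i, 0 < u i) ∧ x = mtVecMul (mtStar D) u := by


  haveI : NeZero n := ⟨by omega⟩
  have hθpos : 0 < θ := by
    rw [hθ]
    exact lt_of_lt_of_le hlam (spec_le_theta A C)
  have hD0 : ∀ i j, 0 ≤ D i j := by
    intro i j; rw [hD]; exact le_trans (hC i j) (le_max_right _ _)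
  constructor
  · rintro ⟨h1, h2⟩
    have hDx : ∀ i j, D i j * x j ≤ x i := by
      intro i j
      rw [hD i j]
      rcases max_choice (θ⁻¹ * A i j) (C i j) with h | h <;> rw [h]
      · have hA2 : A i j * x j / x i ≤ θ := by
          rw [← h2]
          exact fle (fun p : Fin n × Fin n => A p.1 p.2 * x p.2 / x p.1) (i, j)
        rw [div_le_iff₀ (hx i)] at hA2
        calc θ⁻¹ * A i j * x j = θ⁻¹ * (A i j * x j) := by ring
          _ ≤ θ⁻¹ * (θ * x i) := mul_le_mul_of_nonneg_left hA2 (by positivity)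
          _ = x i := by field_simp
      · exact le_trans (fle (fun l => C i l * x l) j) (h1 i)
    exact ⟨x, hx, (star_fixpoint hD0 hx hDx).symm⟩
  · rintro ⟨u, hu, hxu⟩
    have hcyc := Dcycle_le_one hA hC hTr hθpos hθ hD
    have hDx : ∀ i j, D i j * x j ≤ x i := by
      intro i j
      rw [hxu]
      exact star_vec_invariant hD0 hcyc hu i j
    have hCx : ∀ i j, C i j * x j ≤ x i := by
      intro i j
      refine le_trans ?_ (hDx i j)
      apply mul_le_mul_of_nonneg_right _ (hx j).le
      rw [hD]; exact le_max_right _ _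
    refine ⟨fun i => fsup_le fun j => hCx i j, le_antisymm ?_ ?_⟩
    · apply fsup_le
      rintro ⟨i, j⟩
      show A i j * x j / x i ≤ θ
      rw [div_le_iff₀ (hx i)]
      have h1 : θ⁻¹ * A i j * x j ≤ x i := by
        refine le_trans ?_ (hDx i j)
        apply mul_le_mul_of_nonneg_right _ (hx j).le
        rw [hD]; exact le_max_left _ _
      calc A i j * x j = θ * (θ⁻¹ * A i j * x j) := by field_simp
        _ ≤ θ * x i := mul_le_mul_of_nonneg_left h1 hθpos.le
    · rw [hθ]
      exact theta_le_sup hA hC hx hCx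

end
end

section
/- Let n ≥ 1 and let A be an n×n nonnegative real matrix such that for all i, j either A_{ij} > 0 or A_{ji} > 0. Define B by B_{ij} = max(A_{ij}, (A_{ji})^{-}) where t^{-} = 1/t if t > 0 and t^{-} = 0 otherwise, and let μ = λ(B) be the max-times spectral radius of B. Then the minimum over positive vectors x ∈ ℝ_{>0}^n of ρ(A, x) = max( max_{i,j} A_{ij} x_j / x_i , max_{(i,j): A_{ij} > 0} x_i / (A_{ij} x_j) ) equals μ, and the minimum is attained. -/
open scoped BigOperators

noncomputable section

namespace MtRhoAux

variable {n : ℕ}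

/-- Weight of a path of length `k` in the matrix `S`. -/
def pwAux (S : Matrix (Fin n) (Fin n) ℝ) (f : ℕ → Fin n) (k : ℕ) : ℝ :=
  ∏ t ∈ Finset.range k, S (f t) (f (t + 1))

lemma pwAux_pos {S : Matrix (Fin n) (Fin n) ℝ} (hS : ∀ i j, 0 < S i j)
    (f : ℕ → Fin n) (k : ℕ) : 0 < pwAux S f k :=
  Finset.prod_pos fun _ _ => hS _ _

lemma pwAux_congr {S : Matrix (Fin n) (Fin n) ℝ} {f g : ℕ → Fin n} {k : ℕ}
    (h : ∀ m ≤ k, f m = g m) : pwAux S f k = pwAux S g k := by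
  refine Finset.prod_congr rfl fun t ht => ?_
  rw [Finset.mem_range] at ht
  rw [h t (by omega), h (t + 1) (by omega)]

/-- Splicing out a cycle from a path. -/
lemma pwAux_splice (S : Matrix (Fin n) (Fin n) ℝ) (F : ℕ → Fin n) (N p q : ℕ)
    (hpq : p < q) (hqN : q ≤ N) (hF : F p = F q) :
    pwAux S F N =
      pwAux S (fun t => F (p + t)) (q - p) *
        pwAux S (fun t => if t < p then F t else F (t + (q - p))) (N - (q - p)) := by
  have hHsmall : ∀ m, m ≤ p →
      (if m < p then F m else F (m + (q - p))) = F m := by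
    intro m hm
    rcases lt_or_eq_of_le hm with h | h
    · rw [if_pos h]
    · rw [h, if_neg (lt_irrefl p)]
      have : p + (q - p) = q := by omega
      rw [this, hF]
  have hHbig : ∀ m, p ≤ m →
      (if m < p then F m else F (m + (q - p))) = F (m + (q - p)) := by
    intro m hm
    rw [if_neg (not_lt.2 hm)]
  have e1 : pwAux S F N =
      (∏ t ∈ Finset.Ico 0 p, S (F t) (F (t+1))) *
      ((∏ t ∈ Finset.Ico p q, S (F t) (F (t+1))) *
       (∏ t ∈ Finset.Ico q N, S (F t) (F (t+1)))) := by
    rw [Finset.prod_Ico_consecutive _ (le_of_lt hpq) hqN,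
      Finset.prod_Ico_consecutive _ (Nat.zero_le p) (by omega : p ≤ N)]
    rw [pwAux, Finset.range_eq_Ico]
  have e2 : pwAux S (fun t => F (p + t)) (q - p) =
      ∏ t ∈ Finset.Ico p q, S (F t) (F (t+1)) := by
    rw [Finset.prod_Ico_eq_prod_range, pwAux]
    refine Finset.prod_congr rfl fun t _ => ?_
    have h1 : p + t + 1 = p + (t + 1) := by omega
    rw [h1]
  have e3 : pwAux S (fun t => if t < p then F t else F (t + (q - p))) (N - (q - p)) =
      (∏ t ∈ Finset.Ico 0 p, S (F t) (F (t+1))) *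
      (∏ t ∈ Finset.Ico q N, S (F t) (F (t+1))) := by
    have hpL : p ≤ N - (q - p) := by omega
    rw [pwAux, Finset.range_eq_Ico, ← Finset.prod_Ico_consecutive _ (Nat.zero_le p) hpL]
    congr 1
    · refine Finset.prod_congr rfl fun t ht => ?_
      rw [Finset.mem_Ico] at ht
      rw [hHsmall t (by omega), hHsmall (t+1) (by omega)]
    · rw [Finset.prod_Ico_eq_prod_range, Finset.prod_Ico_eq_prod_range]
      have hLp : N - (q - p) - p = N - q := by omega
      rw [hLp]
      refine Finset.prod_congr rfl fun t _ => ?_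
      rw [hHbig (p + t) (by omega), hHbig (p + t + 1) (by omega)]
      have h1 : p + t + (q - p) = q + t := by omega
      have h2 : p + t + 1 + (q - p) = q + t + 1 := by omega
      rw [h1, h2]
  rw [e1, e2, e3]
  ring

/-- Converting a cyclic `Fin k`-indexed product into an `ℕ`-indexed path product. -/
lemma cycle_prod_eq (B : Matrix (Fin n) (Fin n) ℝ) {k : ℕ} (hk : 0 < k)
    (f : ℕ → Fin n) (hf : f k = f 0) :
    (∏ t : Fin k, B (f (t : ℕ)) (f (((t : ℕ) + 1) % k))) =
      ∏ t ∈ Finset.range k, B (f t) (f (t + 1)) := by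
  rw [Fin.prod_univ_eq_prod_range (fun t => B (f t) (f ((t + 1) % k))) k]
  refine Finset.prod_congr rfl fun t ht => ?_
  rw [Finset.mem_range] at ht
  congr 1
  rcases Nat.lt_or_ge (t + 1) k with h | h
  · rw [Nat.mod_eq_of_lt h]
  · have h' : t + 1 = k := by omega
    rw [h', Nat.mod_self, ← hf]

/-- Canonical path of length `k+1` (for `k < n`) from `i` to `j₀`, with interior
vertices given by `v`. -/
def seqAux (j₀ i : Fin n) (k : Fin n) (v : Fin n → Fin n) : ℕ → Fin n :=
  fun m => if m = 0 then i else if h : m ≤ (k : ℕ) then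
    v ⟨m - 1, lt_of_le_of_lt (le_trans (Nat.sub_le m 1) h) k.isLt⟩ else j₀

lemma seqAux_zero (j₀ i : Fin n) (k : Fin n) (v : Fin n → Fin n) :
    seqAux j₀ i k v 0 = i := by simp [seqAux]

lemma seqAux_last (j₀ i : Fin n) (k : Fin n) (v : Fin n → Fin n) :
    seqAux j₀ i k v ((k : ℕ) + 1) = j₀ := by
  simp [seqAux]

lemma seqAux_eq {j₀ i : Fin n} {k : Fin n} {f : ℕ → Fin n}
    (hf0 : f 0 = i) (hfl : f ((k : ℕ) + 1) = j₀) :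
    ∀ m ≤ (k : ℕ) + 1, seqAux j₀ i k (fun t => f ((t : ℕ) + 1)) m = f m := by
  intro m hm
  rcases Nat.eq_zero_or_pos m with h | h
  · rw [h, seqAux_zero, ← hf0]
  · have hm0 : m ≠ 0 := by omega
    simp only [seqAux, if_neg hm0]
    split_ifs with h2
    · show f (m - 1 + 1) = f m
      congr 1
      omega
    · have h3 : m = (k : ℕ) + 1 := by omega
      rw [h3, hfl]

end MtRhoAux

open MtRhoAux

/-- For `B_{ij} = max(A_{ij}, (A_{ji})⁻)`, the minimum over positive
vectors `x` of the Chebyshev-like distance `ρ(A, x)` equals the max-times spectral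
radius `μ = λ(B)`, and it is attained. (In `ℝ`, `(0 : ℝ)⁻¹ = 0`, so `t⁻¹` realizes
`t⁻` for `t ≥ 0`.) -/

theorem mt_rho_min {n : ℕ} (hn : 1 ≤ n) (A : Matrix (Fin n) (Fin n) ℝ)
    (hA : ∀ i j, 0 ≤ A i j) (hAA : ∀ i j, 0 < A i j ∨ 0 < A j i)
    (B : Matrix (Fin n) (Fin n) ℝ) (hB : ∀ i j, B i j = max (A i j) (A j i)⁻¹)
    (μ : ℝ) (hμ : μ = mtSpecRad B) :
    IsLeast { y : ℝ | ∃ x : Fin n → ℝ, (∀ i, 0 < x i) ∧ y = mtRho A x } μ := by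
  haveI : NeZero n := ⟨by omega⟩
  have hj0 : (0 : ℕ) < n := hn
  set j₀ : Fin n := ⟨0, hj0⟩ with hj₀def
  have hBpos : ∀ i j, 0 < B i j := by
    intro i j
    rw [hB]
    rcases hAA i j with h | h
    · exact lt_max_of_lt_left h
    · exact lt_max_of_lt_right (inv_pos.2 h)
  have hApos : ∀ i, 0 < A i i := fun i => (hAA i i).elim id id
  set Λ : Set ℝ := { r : ℝ | ∃ (k : ℕ) (hk : 0 < k), k ≤ n ∧ ∃ f : Fin k → Fin n,
    r = (∏ t : Fin k, B (f t) (f ⟨((t : ℕ) + 1) % k, Nat.mod_lt _ hk⟩)) ^ ((k : ℝ)⁻¹) }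
    with hΛdef
  have hμs : μ = sSup Λ := hμ
  have hΛfin : Λ.Finite := by
    have hsub : Λ ⊆ ⋃ k ∈ Set.Icc 1 n, Set.range (fun f : Fin k → Fin n =>
        (∏ t : Fin k, B (f t) (f ⟨((t : ℕ) + 1) % k, Nat.mod_lt _ t.pos⟩)) ^ ((k : ℝ)⁻¹)) := by
      rintro r ⟨k, hk, hkn, f, rfl⟩
      exact Set.mem_biUnion ⟨hk, hkn⟩ ⟨f, rfl⟩
    exact Set.Finite.subset (Set.Finite.biUnion (Set.finite_Icc 1 n)
      (fun k _ => Set.finite_range _)) hsub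
  have hbdd : BddAbove Λ := hΛfin.bddAbove
  have hmem1 : B j₀ j₀ ∈ Λ := by
    refine ⟨1, one_pos, hn, fun _ => j₀, ?_⟩
    norm_num [Fin.prod_univ_one]
  have hΛne : Λ.Nonempty := ⟨_, hmem1⟩
  have hμpos : 0 < μ := lt_of_lt_of_le (hBpos j₀ j₀) (hμs ▸ le_csSup hbdd hmem1)
  -- Part 1: lower bound
  have hlb : ∀ x : Fin n → ℝ, (∀ i, 0 < x i) → μ ≤ mtRho A x := by
    intro x hx
    set ρ := mtRho A x with hρset
    have hρdef : ρ = max (⨆ p : Fin n × Fin n, A p.1 p.2 * x p.2 / x p.1)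
        (sSup { r : ℝ | ∃ i j, 0 < A i j ∧ r = x i / (A i j * x j) }) := rfl
    have hbdd1 : BddAbove (Set.range fun p : Fin n × Fin n => A p.1 p.2 * x p.2 / x p.1) :=
      Set.Finite.bddAbove (Set.finite_range _)
    have hbdd2 : BddAbove { r : ℝ | ∃ i j, 0 < A i j ∧ r = x i / (A i j * x j) } := by
      apply Set.Finite.bddAbove
      apply Set.Finite.subset (Set.finite_range fun p : Fin n × Fin n =>
        x p.1 / (A p.1 p.2 * x p.2))
      rintro r ⟨i, j, _, rfl⟩
      exact ⟨(i, j), rfl⟩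
    have hsup1 : ∀ i j, A i j * x j / x i ≤ ρ := fun i j => by
      rw [hρdef]
      exact le_trans (le_ciSup hbdd1 (i, j)) (le_max_left _ _)
    have hρ0 : 0 ≤ ρ := le_trans (le_of_lt (div_pos (mul_pos (hApos j₀) (hx j₀)) (hx j₀)))
      (hsup1 j₀ j₀)
    have hkey : ∀ i j, B i j * x j / x i ≤ ρ := by
      intro i j
      rw [hB, max_mul_of_nonneg _ _ (hx j).le, ← max_div_div_right (hx i).le]
      apply max_le
      · exact hsup1 i j
      · by_cases hji : 0 < A j i
        · have heq : (A j i)⁻¹ * x j / x i = x j / (A j i * x i) := by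
            field_simp
          rw [heq, hρdef]
          refine le_trans (le_csSup hbdd2 ?_) (le_max_right _ _)
          exact ⟨j, i, hji, rfl⟩
        · have hz : A j i = 0 := le_antisymm (not_lt.1 hji) (hA j i)
          rw [hz, inv_zero, zero_mul, zero_div]
          exact hρ0
    have hρpos : 0 < ρ :=
      lt_of_lt_of_le (div_pos (mul_pos (hBpos j₀ j₀) (hx j₀)) (hx j₀)) (hkey j₀ j₀)
    rw [hμs]
    refine csSup_le hΛne ?_
    rintro r ⟨k, hk, hkn, g, rfl⟩
    set f : ℕ → Fin n := fun t => g ⟨t % k, Nat.mod_lt _ hk⟩ with hfdef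
    have hfcyc : f k = f 0 := by
      show g _ = g _
      congr 1
      exact Fin.ext (by simp)
    have hconv : (∏ t : Fin k, B (g t) (g ⟨((t : ℕ) + 1) % k, Nat.mod_lt _ hk⟩)) =
        ∏ t ∈ Finset.range k, B (f t) (f (t + 1)) := by
      rw [← cycle_prod_eq B hk f hfcyc]
      refine Finset.prod_congr rfl fun t _ => ?_
      congr 1
      · show g t = g _
        congr 1
        exact Fin.ext (Nat.mod_eq_of_lt t.isLt).symm
      · show g _ = g _
        congr 1
        exact Fin.ext (Nat.mod_eq_of_lt (Nat.mod_lt _ hk)).symm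
    have htel : (∏ t ∈ Finset.range k, x (f (t + 1))) = ∏ t ∈ Finset.range k, x (f t) := by
      have h1 : (∏ t ∈ Finset.range k, x (f (t + 1))) * x (f 0) =
          (∏ t ∈ Finset.range k, x (f t)) * x (f k) :=
        (Finset.prod_range_succ' (fun t => x (f t)) k).symm.trans
          (Finset.prod_range_succ (fun t => x (f t)) k)
      rw [hfcyc] at h1
      exact mul_right_cancel₀ (hx (f 0)).ne' h1
    have hfactor : (∏ t ∈ Finset.range k, B (f t) (f (t + 1))) =
        ∏ t ∈ Finset.range k, (B (f t) (f (t + 1)) * x (f (t + 1)) / x (f t)) := by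
      rw [Finset.prod_div_distrib, Finset.prod_mul_distrib, htel, mul_div_assoc,
        div_self (Finset.prod_pos fun t _ => hx (f t)).ne', mul_one]
    have hbound : (∏ t ∈ Finset.range k, B (f t) (f (t + 1))) ≤ ρ ^ k := by
      rw [hfactor]
      calc ∏ t ∈ Finset.range k, (B (f t) (f (t + 1)) * x (f (t + 1)) / x (f t))
          ≤ ∏ _t ∈ Finset.range k, ρ :=
            Finset.prod_le_prod
              (fun t _ => le_of_lt (div_pos (mul_pos (hBpos _ _) (hx _)) (hx _)))
              (fun t _ => hkey _ _)
        _ = ρ ^ k := by rw [Finset.prod_const, Finset.card_range]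
    rw [hconv]
    have hprod0 : (0:ℝ) ≤ ∏ t ∈ Finset.range k, B (f t) (f (t + 1)) :=
      Finset.prod_nonneg fun t _ => (hBpos _ _).le
    have hμr := Real.rpow_le_rpow (z := (k : ℝ)⁻¹) hprod0 hbound
      (inv_nonneg.2 (Nat.cast_nonneg k))
    rwa [← Real.rpow_natCast ρ k, ← Real.rpow_mul hρpos.le,
      mul_inv_cancel₀ (Nat.cast_ne_zero.2 hk.ne'), Real.rpow_one] at hμr
  -- Part 2: construction of the optimal vector
  set S : Matrix (Fin n) (Fin n) ℝ := fun i j => B i j / μ with hSdef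
  have hSpos : ∀ i j, 0 < S i j := fun i j => div_pos (hBpos i j) hμpos
  have hL1 : ∀ k, 0 < k → k ≤ n → ∀ f : ℕ → Fin n, f k = f 0 → pwAux S f k ≤ 1 := by
    intro k hk hkn f hf
    have hBprod : (0:ℝ) < ∏ t ∈ Finset.range k, B (f t) (f (t + 1)) :=
      Finset.prod_pos fun _ _ => hBpos _ _
    have hmem : (∏ t ∈ Finset.range k, B (f t) (f (t + 1))) ^ ((k : ℝ)⁻¹) ∈ Λ := by
      refine ⟨k, hk, hkn, fun t => f (t : ℕ), ?_⟩
      rw [cycle_prod_eq B hk f hf]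
    have hle : (∏ t ∈ Finset.range k, B (f t) (f (t + 1))) ^ ((k : ℝ)⁻¹) ≤ μ :=
      hμs ▸ le_csSup hbdd hmem
    have hBk : (∏ t ∈ Finset.range k, B (f t) (f (t + 1))) ≤ μ ^ k := by
      have h2 := Real.rpow_le_rpow (z := (k : ℝ))
        (Real.rpow_nonneg hBprod.le _) hle (Nat.cast_nonneg k)
      rwa [← Real.rpow_mul hBprod.le, inv_mul_cancel₀ (Nat.cast_ne_zero.2 hk.ne'),
        Real.rpow_one, Real.rpow_natCast] at h2
    have hpw : pwAux S f k = (∏ t ∈ Finset.range k, B (f t) (f (t + 1))) / μ ^ k := by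
      rw [pwAux, hSdef]
      rw [Finset.prod_div_distrib, Finset.prod_const, Finset.card_range]
    rw [hpw, div_le_one (pow_pos hμpos k)]
    exact hBk
  set x : Fin n → ℝ := fun i => ⨆ p : Fin n × (Fin n → Fin n),
      pwAux S (seqAux j₀ i p.1 p.2) ((p.1 : ℕ) + 1) with hxdef
  have hbddx : ∀ i, BddAbove (Set.range fun p : Fin n × (Fin n → Fin n) =>
      pwAux S (seqAux j₀ i p.1 p.2) ((p.1 : ℕ) + 1)) :=
    fun i => Set.Finite.bddAbove (Set.finite_range _)
  have hxge : ∀ (i : Fin n) (k : ℕ), k < n → ∀ f : ℕ → Fin n,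
      f 0 = i → f (k + 1) = j₀ → pwAux S f (k + 1) ≤ x i := by
    intro i k hk f hf0 hfl
    have h := le_ciSup (hbddx i) (⟨⟨k, hk⟩, fun t => f ((t : ℕ) + 1)⟩ :
      Fin n × (Fin n → Fin n))
    refine le_trans (le_of_eq ?_) h
    exact pwAux_congr fun m hm => (seqAux_eq hf0 hfl m hm).symm
  have hxpos : ∀ i, 0 < x i := by
    intro i
    refine lt_of_lt_of_le (pwAux_pos hSpos (seqAux j₀ i ⟨0, hj0⟩ (fun _ => j₀)) 1) ?_
    exact le_ciSup (hbddx i) (⟨⟨0, hj0⟩, fun _ => j₀⟩ : Fin n × (Fin n → Fin n))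
  have hxattain : ∀ m : Fin n, ∃ (k : ℕ) (_ : k < n) (f : ℕ → Fin n),
      f 0 = m ∧ f (k + 1) = j₀ ∧ x m = pwAux S f (k + 1) := by
    intro m
    obtain ⟨p, hp⟩ := Finite.exists_max (fun p : Fin n × (Fin n → Fin n) =>
      pwAux S (seqAux j₀ m p.1 p.2) ((p.1 : ℕ) + 1))
    refine ⟨(p.1 : ℕ), p.1.isLt, seqAux j₀ m p.1 p.2, seqAux_zero _ _ _ _,
      seqAux_last _ _ _ _, ?_⟩
    exact le_antisymm (ciSup_le hp) (le_ciSup (hbddx m) p)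
  have hsub : ∀ i m, S i m * x m ≤ x i := by
    intro i m
    obtain ⟨k, hk, f, hf0, hfl, hxm⟩ := hxattain m
    set F : ℕ → Fin n := fun t => if t = 0 then i else f (t - 1) with hFdef
    have hF0 : F 0 = i := by simp [hFdef]
    have hFs : ∀ t, F (t + 1) = f t := fun t => by simp [hFdef]
    have hpwF : pwAux S F (k + 2) = S i m * pwAux S f (k + 1) := by
      have h1 : pwAux S F (k + 2) =
          (∏ t ∈ Finset.range (k + 1), S (F (t + 1)) (F (t + 1 + 1))) * S (F 0) (F (0 + 1)) :=
        Finset.prod_range_succ' (fun t => S (F t) (F (t + 1))) (k + 1)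
      rw [h1, hF0, hFs 0, hf0, mul_comm]
      have h2 : (∏ t ∈ Finset.range (k + 1), S (F (t + 1)) (F (t + 1 + 1))) =
          ∏ t ∈ Finset.range (k + 1), S (f t) (f (t + 1)) :=
        Finset.prod_congr rfl fun t _ => by rw [hFs t, hFs (t + 1)]
      rw [h2, pwAux]
    rcases lt_or_eq_of_le (Nat.succ_le_of_lt hk) with hlt | heq
    · -- k + 1 < n : direct
      have hFl : F ((k + 1) + 1) = j₀ := by rw [hFs (k + 1), hfl]
      have := hxge i (k + 1) hlt F hF0 hFl
      calc S i m * x m = pwAux S F (k + 2) := by rw [hxm, ← hpwF]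
        _ ≤ x i := this
    · -- k + 1 = n : splice out a cycle
      have hk2 : k + 2 = n + 1 := by omega
      obtain ⟨a, b, hab, habe⟩ := Fintype.exists_ne_map_eq_of_card_lt
        (fun t : Fin (n + 1) => F (t : ℕ)) (by simp)
      have hvab : (a : ℕ) ≠ (b : ℕ) := fun h => hab (Fin.ext h)
      set p := min (a : ℕ) (b : ℕ) with hpdef
      set q := max (a : ℕ) (b : ℕ) with hqdef
      have hpq : p < q := by omega
      have hqn : q ≤ n := by
        have := a.isLt
        have := b.isLt
        omega
      have hFpq : F p = F q := by
        rcases le_total (a : ℕ) (b : ℕ) with h | h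
        · rw [hpdef, hqdef, min_eq_left h, max_eq_right h]; exact habe
        · rw [hpdef, hqdef, min_eq_right h, max_eq_left h]; exact habe.symm
      have hsplice := pwAux_splice S F (n + 1) p q hpq (by omega) hFpq
      have hcyc : pwAux S (fun t => F (p + t)) (q - p) ≤ 1 := by
        refine hL1 (q - p) (by omega) (by omega) _ ?_
        show F (p + (q - p)) = F (p + 0)
        rw [show p + (q - p) = q by omega, Nat.add_zero]
        exact hFpq.symm
      set H : ℕ → Fin n := fun t => if t < p then F t else F (t + (q - p)) with hHdef
      set L := n + 1 - (q - p) with hLdef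
      have hL1' : 1 ≤ L := by omega
      have hLn : L ≤ n := by omega
      have hLp : p < L := by omega
      have hHF : pwAux S F (n + 1) ≤ pwAux S H L := by
        rw [hsplice]
        have hpos := pwAux_pos hSpos H L
        calc pwAux S (fun t => F (p + t)) (q - p) * pwAux S H L
            ≤ 1 * pwAux S H L := mul_le_mul_of_nonneg_right hcyc hpos.le
          _ = pwAux S H L := one_mul _
      have hH0 : H 0 = i := by
        rcases Nat.eq_zero_or_pos p with h | h
        · show (if (0:ℕ) < p then F 0 else F (0 + (q - p))) = i
          rw [if_neg (by omega), Nat.zero_add, show q - p = q by omega, ← hFpq,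
            show p = 0 from h, hF0]
        · show (if (0:ℕ) < p then F 0 else F (0 + (q - p))) = i
          rw [if_pos h, hF0]
      have hHL : H ((L - 1) + 1) = j₀ := by
        have hL' : (L - 1) + 1 = L := by omega
        rw [hL']
        show (if L < p then F L else F (L + (q - p))) = j₀
        rw [if_neg (by omega), show L + (q - p) = n + 1 by omega, show n + 1 = (k+1)+1 by omega,
          hFs (k + 1), hfl]
      have hxiH : pwAux S H L ≤ x i := by
        have := hxge i (L - 1) (by omega) H hH0 hHL
        rwa [show (L - 1) + 1 = L by omega] at this
      calc S i m * x m = pwAux S F (n + 1) := by rw [hxm, ← hpwF, hk2]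
        _ ≤ pwAux S H L := hHF
        _ ≤ x i := hxiH
  have hBxμ : ∀ i m, B i m * x m / x i ≤ μ := by
    intro i m
    rw [div_le_iff₀ (hxpos i)]
    have h1 : B i m * x m = μ * (S i m * x m) := by
      rw [hSdef]
      field_simp
    rw [h1]
    exact mul_le_mul_of_nonneg_left (hsub i m) hμpos.le
  have hρle : mtRho A x ≤ μ := by
    rw [mtRho]
    apply max_le
    · refine ciSup_le fun pq => ?_
      refine le_trans ?_ (hBxμ pq.1 pq.2)
      have hAB : A pq.1 pq.2 ≤ B pq.1 pq.2 := le_trans (le_max_left _ _) (hB pq.1 pq.2).ge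
      exact (div_le_div_iff_of_pos_right (hxpos pq.1)).2 (mul_le_mul_of_nonneg_right hAB (hxpos pq.2).le)
    · refine csSup_le ⟨x j₀ / (A j₀ j₀ * x j₀), j₀, j₀, hApos j₀, rfl⟩ ?_
      rintro r ⟨i, j, hij, rfl⟩
      have h1 : x i / (A i j * x j) = (A i j)⁻¹ * x i / x j := by
        field_simp
      rw [h1]
      refine le_trans ?_ (hBxμ j i)
      have h2 : (A i j)⁻¹ ≤ B j i := le_trans (le_max_right _ _) (hB j i).ge
      exact (div_le_div_iff_of_pos_right (hxpos j)).2 (mul_le_mul_of_nonneg_right h2 (hxpos i).le)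
  constructor
  · exact ⟨x, hxpos, le_antisymm (hlb x hxpos) hρle⟩
  · rintro y ⟨z, hz, rfl⟩
    exact hlb z hz

end
end

section
/- Let n ≥ 1 and let A be an n×n real matrix. Define B by B_{ij} = max(A_{ij}, −A_{ji}) and let μ = λ(B) be the maximum cycle mean of B. Then the minimum over all vectors x ∈ ℝ^n of the Chebyshev distance max_{i,j} |A_{ij} − (x_i − x_j)| equals μ, and the minimum is attained. -/
open scoped BigOperators

noncomputable section

namespace MPChebAux

variable {n : ℕ}

/-- Weight of a walk of length `m` along `g`. -/
def wt (C : Matrix (Fin n) (Fin n) ℝ) (m : ℕ) (g : ℕ → Fin n) : ℝ :=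
  ∑ t ∈ Finset.range m, C (g t) (g (t + 1))

/-- Path-length reduction: if all cycles of length ≤ n are nonpositive, any walk is
dominated by a walk of length ≤ n with the same start. -/
lemma reduce (C : Matrix (Fin n) (Fin n) ℝ)
    (hcyc : ∀ m, 0 < m → m ≤ n → ∀ g : ℕ → Fin n, g m = g 0 → wt C m g ≤ 0) :
    ∀ k (g : ℕ → Fin n), ∃ m, m ≤ n ∧ ∃ h : ℕ → Fin n, h 0 = g 0 ∧ wt C k g ≤ wt C m h := by
  intro k
  induction k using Nat.strong_induction_on with
  | _ k ih =>
    intro g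
    by_cases hk : k ≤ n
    · exact ⟨k, hk, g, rfl, le_refl _⟩
    push_neg at hk
    obtain ⟨p, q, hpq, hqn, hgpq⟩ : ∃ p q : ℕ, p < q ∧ q ≤ n ∧ g p = g q := by
      have hni : ¬ Function.Injective (fun t : Fin (n + 1) => g (t : ℕ)) := by
        intro hinj
        have := Fintype.card_le_of_injective _ hinj
        simp at this
      obtain ⟨a, b, hab, hne⟩ := Function.not_injective_iff.mp hni
      rcases Nat.lt_or_ge (a : ℕ) (b : ℕ) with h | h
      · exact ⟨a, b, h, Nat.lt_succ_iff.mp b.isLt, hab⟩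
      · have hba : (b : ℕ) < (a : ℕ) :=
          lt_of_le_of_ne h (fun he => hne (Fin.ext he.symm))
        exact ⟨b, a, hba, Nat.lt_succ_iff.mp a.isLt, hab.symm⟩
    set d := q - p with hd
    have hd1 : 1 ≤ d := by omega
    have hqpd : q = p + d := by omega
    set g' : ℕ → Fin n := fun t => if t < p then g t else g (t + d) with hg'
    have e1 : ∀ t < p, C (g' t) (g' (t+1)) = C (g t) (g (t+1)) := by
      intro t ht
      have h1 : g' t = g t := by simp [hg', ht]
      have h2 : g' (t+1) = g (t+1) := by
        by_cases h : t + 1 < p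
        · simp [hg', h]
        · have hp : t + 1 = p := by omega
          have e : g' (t+1) = g (t + 1 + d) := by simp [hg', h]
          rw [e, hp, ← hqpd]
          exact hgpq.symm
      rw [h1, h2]
    have e2 : ∀ t, C (g' (p + t)) (g' (p + t + 1)) = C (g (q + t)) (g (q + t + 1)) := by
      intro t
      have h1 : g' (p + t) = g (q + t) := by
        have hnl : ¬ (p + t < p) := by omega
        simp only [hg', hnl, if_false]
        congr 1; omega
      have h2 : g' (p + t + 1) = g (q + t + 1) := by
        have hnl : ¬ (p + t + 1 < p) := by omega
        simp only [hg', hnl, if_false]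
        congr 1; omega
      rw [h1, h2]
    have hsplit : wt C k g
        = wt C (k - d) g' + ∑ t ∈ Finset.range d, C (g (p + t)) (g (p + t + 1)) := by
      set c := k - q with hc
      have hA : wt C k g = (∑ t ∈ Finset.range p, C (g t) (g (t+1)))
          + ((∑ t ∈ Finset.range d, C (g (p + t)) (g (p + t + 1)))
          + (∑ t ∈ Finset.range c, C (g (q + t)) (g (q + t + 1)))) := by
        rw [wt, show k = p + (d + c) by omega, Finset.sum_range_add,
          Finset.sum_range_add]
        congr 1
        congr 1
        refine Finset.sum_congr rfl fun t _ => ?_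
        congr 2 <;> omega
      have hBq : wt C (k - d) g' = (∑ t ∈ Finset.range p, C (g t) (g (t+1)))
          + (∑ t ∈ Finset.range c, C (g (q + t)) (g (q + t + 1))) := by
        rw [wt, show k - d = p + c by omega, Finset.sum_range_add]
        congr 1
        · refine Finset.sum_congr rfl fun t ht => ?_
          exact e1 t (Finset.mem_range.mp ht)
        · exact Finset.sum_congr rfl fun t _ => e2 t
      rw [hA, hBq]; ring
    have hcy : ∑ t ∈ Finset.range d, C (g (p + t)) (g (p + t + 1)) ≤ 0 := by
      have hcl : (fun t => g (p + t)) d = (fun t => g (p + t)) 0 := by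
        simp only []
        rw [← hqpd]
        simpa using hgpq.symm
      have := hcyc d hd1 (by omega) (fun t => g (p + t)) hcl
      simpa [wt, add_assoc] using this
    obtain ⟨m, hm, h, hh0, hle⟩ := ih (k - d) (by omega) g'
    have hg'0 : g' 0 = g 0 := by
      by_cases h0 : 0 < p
      · simp [hg', h0]
      · have hp0 : p = 0 := by omega
        have e : g' 0 = g (0 + d) := by simp [hg', hp0]
        rw [e, show 0 + d = q by omega, ← hgpq, hp0]
    exact ⟨m, hm, h, hh0.trans hg'0, by linarith⟩

lemma bddAbove_cycset (B : Matrix (Fin n) (Fin n) ℝ) (hn : 1 ≤ n) :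
    BddAbove { r : ℝ | ∃ (k : ℕ) (hk : 0 < k), k ≤ n ∧ ∃ f : Fin k → Fin n,
      r = (∑ t : Fin k, B (f t) (f ⟨((t : ℕ) + 1) % k, Nat.mod_lt _ hk⟩)) / (k : ℝ) } := by
  haveI : Nonempty (Fin n) := Fin.pos_iff_nonempty.mp hn
  refine ⟨⨆ p : Fin n × Fin n, B p.1 p.2, ?_⟩
  rintro r ⟨k, hk, hkn, f, rfl⟩
  rw [div_le_iff₀ (by exact_mod_cast hk : (0:ℝ) < (k:ℝ))]
  calc (∑ t : Fin k, B (f t) (f ⟨((t : ℕ) + 1) % k, Nat.mod_lt _ hk⟩))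
      ≤ ∑ _t : Fin k, ⨆ p : Fin n × Fin n, B p.1 p.2 :=
        Finset.sum_le_sum fun t _ =>
          le_ciSup (f := fun p : Fin n × Fin n => B p.1 p.2)
            (Set.Finite.bddAbove (Set.finite_range _)) (f t, f ⟨_, Nat.mod_lt _ hk⟩)
    _ = (⨆ p : Fin n × Fin n, B p.1 p.2) * k := by
        rw [Finset.sum_const, Finset.card_univ, Fintype.card_fin, nsmul_eq_mul, mul_comm]

lemma cycle_sum_le (B : Matrix (Fin n) (Fin n) ℝ) (hn : 1 ≤ n) (m : ℕ) (hm : 0 < m)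
    (hmn : m ≤ n) (g : ℕ → Fin n) (hg : g m = g 0) :
    wt B m g ≤ m * mpCycleMean B := by
  have hmem : wt B m g / m ∈ { r : ℝ | ∃ (k : ℕ) (hk : 0 < k), k ≤ n ∧ ∃ f : Fin k → Fin n,
      r = (∑ t : Fin k, B (f t) (f ⟨((t : ℕ) + 1) % k, Nat.mod_lt _ hk⟩)) / (k : ℝ) } := by
    refine ⟨m, hm, hmn, fun t => g (t : ℕ), ?_⟩
    congr 1
    rw [show (∑ t : Fin m, B (g (t : ℕ)) (g (((t : ℕ) + 1) % m)))
        = ∑ t ∈ Finset.range m, B (g t) (g ((t + 1) % m)) from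
      Fin.sum_univ_eq_sum_range (fun t => B (g t) (g ((t + 1) % m))) m]
    refine (Finset.sum_congr rfl fun t ht => ?_).symm
    rw [Finset.mem_range] at ht
    by_cases h : t + 1 < m
    · rw [Nat.mod_eq_of_lt h]
    · have he : t + 1 = m := by omega
      rw [he, Nat.mod_self, hg]
  have hle := le_csSup (bddAbove_cycset B hn) hmem
  have hm' : (0:ℝ) < m := by exact_mod_cast hm
  rw [mpCycleMean] at *
  have := (div_le_iff₀ hm').mp hle
  linarith [this]

lemma telescope (k : ℕ) (hk : 0 < k) (v : Fin k → ℝ) :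
    ∑ t : Fin k, v ⟨((t : ℕ) + 1) % k, Nat.mod_lt _ hk⟩ = ∑ t : Fin k, v t := by
  set G : ℕ → ℝ := fun t => v ⟨t % k, Nat.mod_lt _ hk⟩ with hG
  have h1 : ∑ t : Fin k, v ⟨((t : ℕ) + 1) % k, Nat.mod_lt _ hk⟩
      = ∑ t ∈ Finset.range k, G (t + 1) :=
    Fin.sum_univ_eq_sum_range (fun t => G (t + 1)) k
  have h2 : ∑ t : Fin k, v t = ∑ t ∈ Finset.range k, G t := by
    rw [← Fin.sum_univ_eq_sum_range G k]
    refine Finset.sum_congr rfl fun t _ => ?_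
    congr 1
    exact Fin.ext (Nat.mod_eq_of_lt t.isLt).symm
  have h3 := Finset.sum_range_succ' G k
  have h4 := Finset.sum_range_succ G k
  have h5 : G k = G 0 := by
    simp only [hG]
    congr 1
    exact Fin.ext (by simp)
  rw [h1, h2]
  linarith

lemma lower_bound (hn : 1 ≤ n) (A B : Matrix (Fin n) (Fin n) ℝ)
    (hB : ∀ i j, B i j = max (A i j) (-(A j i))) (x : Fin n → ℝ) :
    mpCycleMean B ≤ ⨆ p : Fin n × Fin n, |A p.1 p.2 - (x p.1 - x p.2)| := by
  haveI : Nonempty (Fin n) := Fin.pos_iff_nonempty.mp hn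
  set y := ⨆ p : Fin n × Fin n, |A p.1 p.2 - (x p.1 - x p.2)| with hy
  have hbdd : BddAbove (Set.range fun p : Fin n × Fin n => |A p.1 p.2 - (x p.1 - x p.2)|) :=
    Set.Finite.bddAbove (Set.finite_range _)
  have hyp : ∀ i j : Fin n, |A i j - (x i - x j)| ≤ y := fun i j => le_ciSup hbdd (i, j)
  have hy0 : 0 ≤ y :=
    le_trans (abs_nonneg _) (hyp (Classical.arbitrary _) (Classical.arbitrary _))
  rw [mpCycleMean]
  refine Real.sSup_le ?_ hy0
  rintro r ⟨k, hk, hkn, f, rfl⟩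
  rw [div_le_iff₀ (by exact_mod_cast hk : (0:ℝ) < (k:ℝ))]
  have key : ∀ t : Fin k, B (f t) (f ⟨((t : ℕ) + 1) % k, Nat.mod_lt _ hk⟩)
      ≤ y + x (f t) - x (f ⟨((t : ℕ) + 1) % k, Nat.mod_lt _ hk⟩) := by
    intro t
    set s := f ⟨((t : ℕ) + 1) % k, Nat.mod_lt _ hk⟩ with hs
    rw [hB]
    have h1 : A (f t) s - (x (f t) - x s) ≤ y := le_trans (le_abs_self _) (hyp _ _)
    have h2 : -(A s (f t) - (x s - x (f t))) ≤ y := le_trans (neg_le_abs _) (hyp _ _)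
    exact max_le (by linarith) (by linarith)
  have htel := telescope k hk (fun t => x (f t))
  calc (∑ t : Fin k, B (f t) (f ⟨((t : ℕ) + 1) % k, Nat.mod_lt _ hk⟩))
      ≤ ∑ t : Fin k, (y + x (f t) - x (f ⟨((t : ℕ) + 1) % k, Nat.mod_lt _ hk⟩)) :=
        Finset.sum_le_sum fun t _ => key t
    _ = y * k := by
        rw [Finset.sum_sub_distrib, Finset.sum_add_distrib, Finset.sum_const,
          Finset.card_univ, Fintype.card_fin, nsmul_eq_mul]
        have htel' : (∑ t : Fin k, x (f ⟨((t : ℕ) + 1) % k, Nat.mod_lt _ hk⟩))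
            = ∑ t : Fin k, x (f t) := htel
        rw [htel']
        ring

end MPChebAux

/-- For `B_{ij} = max(A_{ij}, −A_{ji})`, the minimum over `x ∈ ℝⁿ` of the
Chebyshev distance `max_{i,j} |A_{ij} − (x_i − x_j)|` equals the maximum cycle mean
`μ = λ(B)`, and it is attained. -/
theorem mp_cheb_min {n : ℕ} (hn : 1 ≤ n) (A : Matrix (Fin n) (Fin n) ℝ)
    (B : Matrix (Fin n) (Fin n) ℝ) (hB : ∀ i j, B i j = max (A i j) (-(A j i)))
    (μ : ℝ) (hμ : μ = mpCycleMean B) :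
    IsLeast { y : ℝ | ∃ x : Fin n → ℝ,
        y = ⨆ p : Fin n × Fin n, |A p.1 p.2 - (x p.1 - x p.2)| } μ := by
  haveI : Nonempty (Fin n) := Fin.pos_iff_nonempty.mp hn
  set C : Matrix (Fin n) (Fin n) ℝ := fun i j => B i j - μ with hC
  have hcyc : ∀ m, 0 < m → m ≤ n → ∀ g : ℕ → Fin n, g m = g 0 → MPChebAux.wt C m g ≤ 0 := by
    intro m hm hmn g hg
    have h1 := MPChebAux.cycle_sum_le B hn m hm hmn g hg
    have h2 : MPChebAux.wt C m g = MPChebAux.wt B m g - m * μ := by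
      simp only [MPChebAux.wt, hC]
      rw [Finset.sum_sub_distrib, Finset.sum_const, Finset.card_range, nsmul_eq_mul]
    rw [h2, hμ]
    linarith
  set M1 : ℝ := max 0 (⨆ p : Fin n × Fin n, C p.1 p.2) with hM1
  have hM1e : ∀ i j, C i j ≤ M1 := fun i j =>
    le_trans (le_ciSup (f := fun p : Fin n × Fin n => C p.1 p.2)
      (Set.Finite.bddAbove (Set.finite_range _)) (i, j)) (le_max_right _ _)
  set P : Fin n → Set ℝ := fun i =>
    {w | ∃ m, 1 ≤ m ∧ m ≤ n ∧ ∃ g : ℕ → Fin n, g 0 = i ∧ w = MPChebAux.wt C m g} with hP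
  have hPb : ∀ i, BddAbove (P i) := by
    intro i
    refine ⟨n * M1, ?_⟩
    rintro w ⟨m, hm1, hmn, g, hg0, rfl⟩
    calc MPChebAux.wt C m g ≤ ∑ _t ∈ Finset.range m, M1 :=
          Finset.sum_le_sum fun t _ => hM1e _ _
      _ = m * M1 := by rw [Finset.sum_const, Finset.card_range, nsmul_eq_mul]
      _ ≤ n * M1 := by
          have h1 : (m:ℝ) ≤ n := by exact_mod_cast hmn
          have h2 : (0:ℝ) ≤ M1 := le_max_left _ _
          nlinarith
  have hPne : ∀ i, (P i).Nonempty := fun i =>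
    ⟨MPChebAux.wt C 1 (fun _ => i), 1, le_refl 1, hn, fun _ => i, rfl, rfl⟩
  set E : Fin n → ℝ := fun i => sSup (P i) with hE
  set x : Fin n → ℝ := fun i => max 0 (E i) with hx
  have hK : ∀ i j, C i j + x j ≤ x i := by
    intro i j
    have hx0 : 0 ≤ x i := le_max_left _ _
    have hEx : E i ≤ x i := le_max_right _ _
    have hEx' : sSup (P i) ≤ x i := by rw [hE] at hEx; exact hEx
    have hCE : C i j ≤ E i := by
      rw [hE]
      refine le_csSup (hPb i) ?_
      refine ⟨1, le_refl 1, hn, (fun t => if t = 0 then i else j), by simp, ?_⟩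
      simp [MPChebAux.wt]
    have h2 : C i j + E j ≤ x i := by
      have hsle : sSup (P j) ≤ x i - C i j := by
        refine csSup_le (hPne j) ?_
        rintro w ⟨m, hm1, hmn, g, hg0, rfl⟩
        rw [le_sub_iff_add_le]
        set g' : ℕ → Fin n := fun t => if t = 0 then i else g (t - 1) with hg'
        have hwt : MPChebAux.wt C (m+1) g' = C i j + MPChebAux.wt C m g := by
          rw [MPChebAux.wt, Finset.sum_range_succ']
          have ha : ∀ t, C (g' (t+1)) (g' (t+1+1)) = C (g t) (g (t+1)) := by
            intro t
            have h1 : g' (t+1) = g t := by simp [hg']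
            have h2 : g' (t+1+1) = g (t+1) := by simp [hg']
            rw [h1, h2]
          have hb : C (g' 0) (g' (0+1)) = C i j := by
            have h1 : g' 0 = i := by simp [hg']
            have h2 : g' (0+1) = g 0 := by simp [hg']
            rw [h1, h2, hg0]
          rw [Finset.sum_congr rfl (fun t _ => ha t), hb, add_comm]
          rfl
        obtain ⟨m', hm', h, hh0, hle⟩ := MPChebAux.reduce C hcyc (m+1) g'
        have hh0i : h 0 = i := hh0.trans (by simp [hg'])
        rcases Nat.eq_zero_or_pos m' with h0 | h0
        · have hz : MPChebAux.wt C m' h = 0 := by rw [h0]; simp [MPChebAux.wt]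
          rw [hz] at hle
          linarith [hwt, hle, hx0]
        · have hmem : MPChebAux.wt C m' h ∈ P i := ⟨m', h0, hm', h, hh0i, rfl⟩
          have hEi := le_csSup (hPb i) hmem
          linarith [hwt, hle, hEi, hEx']
      rw [hE]
      linarith [hsle]
    have h1 : C i j + 0 ≤ x i := by
      rw [add_zero]; exact le_trans hCE hEx
    calc C i j + x j = max (C i j + 0) (C i j + E j) := by
          rw [hx]; exact (max_add_add_left _ _ _).symm
      _ ≤ x i := max_le h1 h2
  have hub : ∀ p : Fin n × Fin n, |A p.1 p.2 - (x p.1 - x p.2)| ≤ μ := by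
    rintro ⟨i, j⟩
    show |A i j - (x i - x j)| ≤ μ
    have h1 : -(A i j) ≤ B j i := by rw [hB]; exact le_max_right _ _
    have h2 := hK j i
    have h3 : A i j ≤ B i j := by rw [hB]; exact le_max_left _ _
    have h4 := hK i j
    simp only [hC] at h2 h4
    rw [abs_le]
    constructor
    · linarith
    · linarith
  constructor
  · have hge : μ ≤ ⨆ p : Fin n × Fin n, |A p.1 p.2 - (x p.1 - x p.2)| := by
      rw [hμ]; exact MPChebAux.lower_bound hn A B hB x
    have hle : (⨆ p : Fin n × Fin n, |A p.1 p.2 - (x p.1 - x p.2)|) ≤ μ := ciSup_le hub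
    exact ⟨x, le_antisymm hge hle⟩
  · rintro y ⟨x', rfl⟩
    rw [hμ]
    exact MPChebAux.lower_bound hn A B hB x'

end
end

section
/- Let n ≥ 1 and let A be an n×n real matrix. Define B by B_{ij} = max(A_{ij}, −A_{ji}) and let μ = λ(B) be the maximum cycle mean of B. A vector x ∈ ℝ^n satisfies max_{i,j} |A_{ij} − (x_i − x_j)| = μ (i.e., x minimizes this Chebyshev distance over ℝ^n) if and only if there exists u ∈ ℝ^n such that x = (B − μ)^* ⊗ u in max-plus arithmetic, where B − μ denotes the matrix with entries B_{ij} − μ. -/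
open scoped BigOperators

noncomputable section

namespace MPAux

lemma fbdd {ι : Type*} [Finite ι] (f : ι → ℝ) : BddAbove (Set.range f) :=
  (Set.finite_range f).bddAbove

lemma le_fsup {ι : Type*} [Finite ι] (f : ι → ℝ) (i : ι) : f i ≤ ⨆ j, f j :=
  le_ciSup (fbdd f) i

lemma fsup_le {ι : Type*} [Nonempty ι] {f : ι → ℝ} {a : ℝ} (h : ∀ i, f i ≤ a) :
    (⨆ i, f i) ≤ a := ciSup_le h

variable {n : ℕ}

def cmSet (B : Matrix (Fin n) (Fin n) ℝ) : Set ℝ :=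
  { r : ℝ | ∃ (k : ℕ) (hk : 0 < k), k ≤ n ∧ ∃ f : Fin k → Fin n,
    r = (∑ t : Fin k, B (f t) (f ⟨((t : ℕ) + 1) % k, Nat.mod_lt _ hk⟩)) / (k : ℝ) }

lemma mpCycleMean_eq (B : Matrix (Fin n) (Fin n) ℝ) : mpCycleMean B = sSup (cmSet B) := rfl

lemma cmSet_nonempty (hn : 1 ≤ n) (B : Matrix (Fin n) (Fin n) ℝ) : (cmSet B).Nonempty := by
  refine ⟨_, 1, one_pos, hn, fun _ => ⟨0, hn⟩, rfl⟩

lemma cmSet_bddAbove (hn : 1 ≤ n) (B : Matrix (Fin n) (Fin n) ℝ) : BddAbove (cmSet B) := by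
  haveI : NeZero n := ⟨by omega⟩
  refine ⟨⨆ p : Fin n × Fin n, B p.1 p.2, ?_⟩
  rintro r ⟨k, hk, hkn, f, rfl⟩
  rw [div_le_iff₀ (by positivity)]
  calc (∑ t : Fin k, B (f t) (f ⟨((t : ℕ) + 1) % k, Nat.mod_lt _ hk⟩))
      ≤ ∑ _t : Fin k, (⨆ p : Fin n × Fin n, B p.1 p.2) := by
        apply Finset.sum_le_sum; intro t _
        exact le_fsup (fun p : Fin n × Fin n => B p.1 p.2) (_, _)
    _ = (⨆ p : Fin n × Fin n, B p.1 p.2) * k := by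
        simp [mul_comm]


def wSum (M : Matrix (Fin n) (Fin n) ℝ) : List (Fin n) → ℝ
  | a :: b :: l => M a b + wSum M (b :: l)
  | _ => 0

@[simp] lemma wSum_nil (M : Matrix (Fin n) (Fin n) ℝ) : wSum M [] = 0 := rfl
@[simp] lemma wSum_single (M : Matrix (Fin n) (Fin n) ℝ) (a : Fin n) : wSum M [a] = 0 := rfl
@[simp] lemma wSum_cons₂ (M : Matrix (Fin n) (Fin n) ℝ) (a b : Fin n) (l : List (Fin n)) :
    wSum M (a :: b :: l) = M a b + wSum M (b :: l) := rfl

lemma wSum_split (M : Matrix (Fin n) (Fin n) ℝ) (a : Fin n) :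
    ∀ (l1 l2 : List (Fin n)), wSum M (l1 ++ a :: l2) = wSum M (l1 ++ [a]) + wSum M (a :: l2)
  | [], l2 => by simp
  | [b], l2 => by simp
  | b :: c :: t, l2 => by
      have ih := wSum_split M a (c :: t) l2
      simp only [List.cons_append, wSum_cons₂] at *
      rw [ih]; ring

lemma wSum_eq_sum (M : Matrix (Fin n) (Fin n) ℝ) :
    ∀ (l : List (Fin n)) (a : Fin n),
      wSum M (a :: l) = ∑ t : Fin l.length,
        M ((a :: l).getD (t : ℕ) a) ((a :: l).getD ((t : ℕ) + 1) a)
  | [], a => by simp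
  | b :: t, a => by
      rw [wSum_cons₂, wSum_eq_sum M t b]
      simp only [List.length_cons]
      rw [Fin.sum_univ_succ]
      congr 1
      · apply Finset.sum_congr rfl
        intro s _
        have hs := s.isLt
        rw [List.getD_eq_getElem _ _ (by simp only [List.length_cons]; omega), List.getD_eq_getElem _ _ (by simp only [List.length_cons]; omega),
            List.getD_eq_getElem _ _ (by simp only [List.length_cons]; omega), List.getD_eq_getElem _ _ (by simp only [List.length_cons]; omega)]
        simp

lemma wSum_cycle_eq (M : Matrix (Fin n) (Fin n) ℝ) (a : Fin n) (l2 : List (Fin n)) :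
    wSum M ((a :: l2) ++ [a]) =
      ∑ t : Fin (l2.length + 1),
        M ((a :: l2).getD (t : ℕ) a) ((a :: l2).getD (((t : ℕ) + 1) % (l2.length + 1)) a) := by
  have h : (a :: l2) ++ [a] = a :: (l2 ++ [a]) := rfl
  rw [h, wSum_eq_sum]
  have hlen : (l2.length + 1) = (l2 ++ [a]).length := by simp
  rw [← Fin.sum_congr' _ hlen]
  apply Finset.sum_congr rfl
  intro t _
  have ht := t.isLt
  have hcast : ((Fin.cast hlen t : Fin (l2++[a]).length) : ℕ) = (t : ℕ) := rfl
  rw [hcast]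
  have h2 : a :: (l2 ++ [a]) = (a :: l2) ++ [a] := rfl
  congr 1
  · rw [h2, List.getD_append _ _ _ _ (by simpa using ht)]
  · by_cases hc : (t : ℕ) + 1 < l2.length + 1
    · rw [h2, List.getD_append _ _ _ _ (by simp; omega), Nat.mod_eq_of_lt hc]
    · have he : (t : ℕ) + 1 = l2.length + 1 := by omega
      rw [h2, he, Nat.mod_self]
      rw [List.getD_eq_getElem _ _ (by simp), List.getD_eq_getElem _ _ (by simp)]
      rw [List.getElem_append_right (by simp)]
      simp

lemma mpPow_succ_apply (M : Matrix (Fin n) (Fin n) ℝ) (m : ℕ) (i k : Fin n) :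
    mpPow M (m + 1) i k = ⨆ j : Fin n, (mpPow M m i j + M j k) := rfl

lemma pow_eq_walk (M : Matrix (Fin n) (Fin n) ℝ) :
    ∀ (m : ℕ) (i k : Fin n), ∃ l : List (Fin n), l.length = m ∧
      mpPow M m i k = wSum M (i :: (l ++ [k]))
  | 0, i, k => ⟨[], rfl, by simp [mpPow]⟩
  | (m + 1), i, k => by
      haveI : Nonempty (Fin n) := ⟨i⟩
      obtain ⟨j0, hj0⟩ := Finite.exists_max (fun j : Fin n => mpPow M m i j + M j k)
      obtain ⟨l, hl, hw⟩ := pow_eq_walk M m i j0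
      refine ⟨l ++ [j0], by simp [hl], ?_⟩
      have hsup : mpPow M (m + 1) i k = mpPow M m i j0 + M j0 k := by
        rw [mpPow_succ_apply]
        exact le_antisymm (fsup_le hj0) (le_fsup (fun j : Fin n => mpPow M m i j + M j k) j0)
      have hcat : i :: ((l ++ [j0]) ++ [k]) = (i :: l) ++ (j0 :: [k]) := by simp
      rw [hsup, hcat, wSum_split M j0 (i :: l) [k]]
      have : wSum M ((i :: l) ++ [j0]) = wSum M (i :: (l ++ [j0])) := rfl
      rw [this, ← hw]
      simp

lemma walk_le_pow (M : Matrix (Fin n) (Fin n) ℝ) (l : List (Fin n)) :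
    ∀ (i k : Fin n), wSum M (i :: (l ++ [k])) ≤ mpPow M l.length i k := by
  induction l using List.reverseRecOn with
  | nil => intro i k; simp [mpPow]
  | append_singleton l j0 ih =>
      intro i k
      have hcat : i :: ((l ++ [j0]) ++ [k]) = (i :: l) ++ (j0 :: [k]) := by simp
      rw [hcat, wSum_split M j0 (i :: l) [k]]
      have h1 : wSum M ((i :: l) ++ [j0]) = wSum M (i :: (l ++ [j0])) := rfl
      rw [h1]
      have h2 : wSum M (i :: (l ++ [j0])) + wSum M (j0 :: [k]) ≤ mpPow M l.length i j0 + M j0 k := by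
        have := ih i j0
        simp only [wSum_cons₂, wSum_single] at *
        linarith
      refine h2.trans ?_
      have h3 : (l ++ [j0]).length = l.length + 1 := by simp
      rw [h3, mpPow_succ_apply]
      exact le_fsup (fun j : Fin n => mpPow M l.length i j + M j k) j0

lemma not_nodup_decomp {α : Type*} :
    ∀ (L : List α), ¬ L.Nodup → ∃ (a : α) (l1 l2 l3 : List α), L = l1 ++ a :: l2 ++ a :: l3
  | [], h => absurd List.nodup_nil h
  | b :: t, h => by
      by_cases hb : b ∈ t
      · obtain ⟨s, u, rfl⟩ := List.append_of_mem hb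
        exact ⟨b, [], s, u, rfl⟩
      · have ht : ¬ t.Nodup := by
          intro hnd; exact h (List.nodup_cons.mpr ⟨hb, hnd⟩)
        obtain ⟨a, l1, l2, l3, rfl⟩ := not_nodup_decomp t ht
        exact ⟨a, b :: l1, l2, l3, rfl⟩


lemma mpStar_apply (M : Matrix (Fin n) (Fin n) ℝ) (i k : Fin n) :
    mpStar M i k = if i = k then max 0 (⨆ m : Fin (n - 1), mpPow M (m : ℕ) i k)
      else ⨆ m : Fin (n - 1), mpPow M (m : ℕ) i k := rfl

lemma star_diag_nonneg (M : Matrix (Fin n) (Fin n) ℝ) (i : Fin n) : 0 ≤ mpStar M i i := by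
  rw [mpStar_apply]; simp

lemma pow_le_star_of_lt (M : Matrix (Fin n) (Fin n) ℝ) {m : ℕ} (hm : m < n - 1) (i k : Fin n) :
    mpPow M m i k ≤ mpStar M i k := by
  have h := le_fsup (fun j : Fin (n - 1) => mpPow M (j : ℕ) i k) ⟨m, hm⟩
  rw [mpStar_apply]
  split
  · exact h.trans (le_max_right _ _)
  · exact h

lemma pow_le_star (M : Matrix (Fin n) (Fin n) ℝ) (hn : 1 ≤ n)
    (hcyc : ∀ (a : Fin n) (l2 : List (Fin n)), l2.length + 1 ≤ n →
      wSum M ((a :: l2) ++ [a]) ≤ 0) :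
    ∀ (m : ℕ) (i k : Fin n), mpPow M m i k ≤ mpStar M i k := by
  intro m
  induction m using Nat.strong_induction_on with
  | _ m IH =>
    intro i k
    by_cases hm : m < n - 1
    · exact pow_le_star_of_lt M hm i k
    · push_neg at hm
      obtain ⟨l, hl, hEq⟩ := pow_eq_walk M m i k
      set L := i :: (l ++ [k]) with hLdef
      have hLlen : L.length = m + 2 := by simp [hLdef, hl]
      have htake : (L.take (n + 1)).length = n + 1 := by
        rw [List.length_take]; omega
      have hnd : ¬ (L.take (n + 1)).Nodup := by
        intro hnd
        have := List.Nodup.length_le_card hnd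
        rw [htake, Fintype.card_fin] at this
        omega
      obtain ⟨a, l1, l2, l3, hdec⟩ := not_nodup_decomp _ hnd
      have hL : L = l1 ++ a :: (l2 ++ a :: (l3 ++ L.drop (n + 1))) := by
        conv_lhs => rw [← List.take_append_drop (n + 1) L]
        rw [hdec]; simp
      set l3' := l3 ++ L.drop (n + 1) with hl3'
      have hlens : l1.length + l2.length + l3.length + 2 = n + 1 := by
        have := htake; rw [hdec] at this; simp at this; omega
      have hcycle : wSum M ((a :: l2) ++ [a]) ≤ 0 := hcyc a l2 (by omega)
      -- weight comparison
      have hw1 : wSum M L = wSum M (l1 ++ [a]) + wSum M (a :: (l2 ++ a :: l3')) := by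
        rw [hL]; exact wSum_split M a l1 (l2 ++ a :: l3')
      have hw2 : wSum M (a :: (l2 ++ a :: l3')) =
          wSum M ((a :: l2) ++ [a]) + wSum M (a :: l3') := by
        have : a :: (l2 ++ a :: l3') = (a :: l2) ++ a :: l3' := rfl
        rw [this, wSum_split M a (a :: l2) l3']
      set L' := l1 ++ a :: l3' with hL'def
      have hw3 : wSum M L' = wSum M (l1 ++ [a]) + wSum M (a :: l3') :=
        wSum_split M a l1 l3'
      have hwle : wSum M L ≤ wSum M L' := by rw [hw1, hw2, hw3]; linarith
      -- endpoints
      have hhead : ∃ r, L' = i :: r := by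
        cases l1 with
        | nil =>
            have : L = a :: (l2 ++ a :: l3') := by simpa using hL
            have hia : i = a := by
              have := hLdef ▸ this
              exact (List.cons.injEq _ _ _ _ ▸ this).1
            exact ⟨l3', by simp [hL'def, ← hia]⟩
        | cons c t =>
            have : L = c :: (t ++ a :: (l2 ++ a :: l3')) := by simpa using hL
            have hic : i = c := by
              have := hLdef ▸ this
              exact (List.cons.injEq _ _ _ _ ▸ this).1
            exact ⟨t ++ a :: l3', by simp [hL'def, ← hic]⟩
      have hlastL : L.getLast? = some k := by
        have : L = (i :: l) ++ [k] := by simp [hLdef]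
        rw [this, List.getLast?_concat]
      have hlastL' : L'.getLast? = some k := by
        have h1 : L'.getLast? = (a :: l3').getLast? := List.getLast?_append_cons l1 a l3'
        have h2 : L.getLast? = (a :: l3').getLast? := by
          rw [hL]
          rw [List.getLast?_append_cons l1 a (l2 ++ a :: l3')]
          have : (a :: (l2 ++ a :: l3')) = (a :: l2) ++ a :: l3' := rfl
          rw [this, List.getLast?_append_cons (a :: l2) a l3']
        rw [h1, ← h2, hlastL]
      obtain ⟨r, hr⟩ := hhead
      cases r with
      | nil =>
          -- L' = [i], so k = i and wSum L ≤ 0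
          have hik : i = k := by
            rw [hr] at hlastL'
            simpa using hlastL'
          have : mpPow M m i k ≤ 0 := by
            rw [hEq]
            have : wSum M L' = 0 := by rw [hr]; simp
            linarith [hwle, this]
          exact this.trans (hik ▸ star_diag_nonneg M i)
      | cons c t =>
          have hrne : (c :: t : List (Fin n)) ≠ [] := by simp
          have hklast : (c :: t).getLast hrne = k := by
            rw [hr, List.getLast?_cons_cons, List.getLast?_eq_getLast hrne] at hlastL'
            simpa using hlastL'
          have hdecomp : (c :: t : List (Fin n)) = (c :: t).dropLast ++ [k] := by
            conv_lhs => rw [← List.dropLast_append_getLast hrne]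
            rw [hklast]
          have hwalk : wSum M L' ≤ mpPow M ((c :: t).dropLast.length) i k := by
            rw [hr]
            conv_lhs => rw [hdecomp]
            exact walk_le_pow M _ i k
          have hm'len : (c :: t).dropLast.length = t.length := by simp
          have e1 : l1.length + (l2.length + (l3'.length + 1) + 1) = m + 2 := by
            have := congrArg List.length hL
            rw [hLlen] at this
            simpa using this.symm
          have e2 : l1.length + (l3'.length + 1) = t.length + 1 + 1 := by
            have := congrArg List.length hr
            simpa [hL'def] using this
          have hm' : t.length < m := by omega
          calc mpPow M m i k = wSum M L := hEq
            _ ≤ wSum M L' := hwle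
            _ ≤ mpPow M t.length i k := by rw [← hm'len]; exact hwalk
            _ ≤ mpStar M i k := IH t.length hm' i k

lemma subinv_pow (M : Matrix (Fin n) (Fin n) ℝ) (x : Fin n → ℝ)
    (hsub : ∀ i j, M i j + x j ≤ x i) :
    ∀ (m : ℕ) (i j : Fin n), mpPow M m i j + x j ≤ x i
  | 0, i, j => hsub i j
  | (m + 1), i, j => by
      haveI : Nonempty (Fin n) := ⟨i⟩
      rw [mpPow_succ_apply]
      have h : ∀ l : Fin n, mpPow M m i l + M l j ≤ x i - x j := by
        intro l
        have h1 := subinv_pow M x hsub m i l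
        have h2 := hsub l j
        linarith
      have := fsup_le h
      linarith

lemma prepend_le (M : Matrix (Fin n) (Fin n) ℝ) :
    ∀ (m : ℕ) (i j k : Fin n), M i j + mpPow M m j k ≤ mpPow M (m + 1) i k
  | 0, i, j, k => by
      rw [mpPow_succ_apply]
      exact le_fsup (fun l : Fin n => mpPow M 0 i l + M l k) j
  | (m + 1), i, j, k => by
      haveI : Nonempty (Fin n) := ⟨i⟩
      rw [mpPow_succ_apply M m j k]
      have h : ∀ l : Fin n, mpPow M m j l + M l k ≤ mpPow M (m + 2) i k - M i j := by
        intro l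
        have h1 := prepend_le M m i j l
        have h2 : mpPow M (m + 1) i l + M l k ≤ mpPow M (m + 2) i k :=
          le_fsup (fun l' : Fin n => mpPow M (m + 1) i l' + M l' k) l
        linarith
      have := fsup_le h
      linarith

lemma star_absorb (M : Matrix (Fin n) (Fin n) ℝ) (hn : 1 ≤ n)
    (hcyc : ∀ (a : Fin n) (l2 : List (Fin n)), l2.length + 1 ≤ n →
      wSum M ((a :: l2) ++ [a]) ≤ 0) (i j k : Fin n) :
    M i j + mpStar M j k ≤ mpStar M i k := by
  have hP := pow_le_star M hn hcyc
  have hT : M i j + (⨆ m : Fin (n - 1), mpPow M (m : ℕ) j k) ≤ mpStar M i k := by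
    rcases isEmpty_or_nonempty (Fin (n - 1)) with he | hne
    · rw [Real.iSup_of_isEmpty]
      have hn1 : n = 1 := by
        have hz : n - 1 = 0 := by
          by_contra h
          exact he.false ⟨0, Nat.pos_of_ne_zero h⟩
        omega
      have hjk : j = k := by
        apply Fin.ext
        have h1 := j.isLt
        have h2 := k.isLt
        omega
      subst hjk
      simpa [mpPow] using hP 0 i j
    · have h : ∀ m : Fin (n - 1), mpPow M (m : ℕ) j k ≤ mpStar M i k - M i j := by
        intro m
        have h1 := prepend_le M (m : ℕ) i j k
        have h2 := hP ((m : ℕ) + 1) i k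
        linarith
      have := fsup_le h
      linarith
  rw [mpStar_apply M j k]
  split
  · rename_i hjk
    subst hjk
    rw [← max_add_add_left]
    apply max_le
    · simpa [mpPow] using hP 0 i j
    · exact hT
  · exact hT

lemma star_fix (M : Matrix (Fin n) (Fin n) ℝ) (x : Fin n → ℝ)
    (hsub : ∀ i j, M i j + x j ≤ x i) (i : Fin n) :
    (⨆ j, (mpStar M i j + x j)) = x i := by
  haveI : Nonempty (Fin n) := ⟨i⟩
  apply le_antisymm
  · apply fsup_le
    intro j
    rw [mpStar_apply]
    split
    · rename_i hij
      subst hij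
      have hT : (⨆ m : Fin (n - 1), mpPow M (m : ℕ) i i) ≤ 0 := by
        rcases isEmpty_or_nonempty (Fin (n - 1)) with he | hne
        · rw [Real.iSup_of_isEmpty]
        · apply fsup_le
          intro m
          have := subinv_pow M x hsub (m : ℕ) i i
          linarith
      have : max 0 (⨆ m : Fin (n - 1), mpPow M (m : ℕ) i i) = 0 := max_eq_left hT
      rw [this]; simp
    · rename_i hij
      rcases isEmpty_or_nonempty (Fin (n - 1)) with he | hne
      · exfalso
        have hn1 : n = 1 := by
          have hz : n - 1 = 0 := by
            by_contra h
            exact he.false ⟨0, Nat.pos_of_ne_zero h⟩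
          have := i.isLt
          omega
        exact hij (by apply Fin.ext; have h1 := i.isLt; have h2 := j.isLt; omega)
      · have h : (⨆ m : Fin (n - 1), mpPow M (m : ℕ) i j) ≤ x i - x j := by
          apply fsup_le
          intro m
          have := subinv_pow M x hsub (m : ℕ) i j
          linarith
        linarith
  · calc x i = 0 + x i := by ring
      _ ≤ mpStar M i i + x i := by have := star_diag_nonneg M i; linarith
      _ ≤ ⨆ j, (mpStar M i j + x j) := le_fsup (fun j => mpStar M i j + x j) i

lemma succMod_bijective (k : ℕ) (hk : 0 < k) :
    Function.Bijective (fun t : Fin k => (⟨((t : ℕ) + 1) % k, Nat.mod_lt _ hk⟩ : Fin k)) := by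
  rw [Fintype.bijective_iff_injective_and_card]
  refine ⟨fun t s h => ?_, rfl⟩
  simp only [Fin.mk.injEq] at h
  have key : ∀ u : ℕ, u < k → (u + 1) % k = if u + 1 = k then 0 else u + 1 := by
    intro u hu; split
    · simp [*]
    · exact Nat.mod_eq_of_lt (by omega)
  have ht := t.isLt; have hs := s.isLt
  rw [key _ ht, key _ hs] at h
  apply Fin.ext
  by_cases h1 : (t : ℕ) + 1 = k <;> by_cases h2 : (s : ℕ) + 1 = k <;> simp [h1, h2] at h <;> omega

lemma cycle_wSum_le (B : Matrix (Fin n) (Fin n) ℝ) (μ : ℝ) (hn : 1 ≤ n)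
    (hμle : ∀ r ∈ cmSet B, r ≤ μ) (a : Fin n) (l2 : List (Fin n))
    (hlen : l2.length + 1 ≤ n) :
    wSum (Matrix.of fun i j => B i j - μ) ((a :: l2) ++ [a]) ≤ 0 := by
  rw [wSum_cycle_eq]
  have hk' : 0 < l2.length + 1 := Nat.succ_pos _
  set f : Fin (l2.length + 1) → Fin n := fun s => (a :: l2).getD (s : ℕ) a with hf
  have hmem : (∑ t : Fin (l2.length + 1),
      B (f t) (f ⟨((t : ℕ) + 1) % (l2.length + 1), Nat.mod_lt _ hk'⟩)) / ((l2.length + 1 : ℕ) : ℝ)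
      ∈ cmSet B := ⟨l2.length + 1, hk', hlen, f, rfl⟩
  have hle := hμle _ hmem
  rw [div_le_iff₀ (by positivity)] at hle
  have heq : (∑ t : Fin (l2.length + 1),
      (Matrix.of fun i j => B i j - μ) ((a :: l2).getD (t : ℕ) a)
        ((a :: l2).getD (((t : ℕ) + 1) % (l2.length + 1)) a)) =
      (∑ t : Fin (l2.length + 1),
        B (f t) (f ⟨((t : ℕ) + 1) % (l2.length + 1), Nat.mod_lt _ hk'⟩))
        - ((l2.length + 1 : ℕ) : ℝ) * μ := by
    simp only [Matrix.of_apply, hf]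
    rw [Finset.sum_sub_distrib]
    congr 1
    rw [Finset.sum_const]
    simp [mul_comm]
  rw [heq]
  linarith

lemma abs_sup_eq (A B : Matrix (Fin n) (Fin n) ℝ)
    (hB : ∀ i j, B i j = max (A i j) (-(A j i))) (x : Fin n → ℝ) (hn : 1 ≤ n) :
    (⨆ p : Fin n × Fin n, |A p.1 p.2 - (x p.1 - x p.2)|) =
      ⨆ p : Fin n × Fin n, (B p.1 p.2 + x p.2 - x p.1) := by
  haveI : Nonempty (Fin n) := ⟨⟨0, hn⟩⟩
  apply le_antisymm
  · apply fsup_le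
    rintro ⟨i, j⟩
    apply abs_le.mpr
    constructor
    · have h1 := le_fsup (fun p : Fin n × Fin n => B p.1 p.2 + x p.2 - x p.1) (j, i)
      have h2 : -(A i j) ≤ B j i := by rw [hB j i]; exact le_max_right _ _
      simp only at h1
      linarith
    · have h1 := le_fsup (fun p : Fin n × Fin n => B p.1 p.2 + x p.2 - x p.1) (i, j)
      have h2 : A i j ≤ B i j := by rw [hB i j]; exact le_max_left _ _
      simp only at h1
      linarith
  · apply fsup_le
    rintro ⟨i, j⟩
    simp only
    rcases max_choice (A i j) (-(A j i)) with h | h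
    · have h1 := le_fsup (fun p : Fin n × Fin n => |A p.1 p.2 - (x p.1 - x p.2)|) (i, j)
      simp only at h1
      have h2 : A i j - (x i - x j) ≤ |A i j - (x i - x j)| := le_abs_self _
      rw [hB i j, h]
      linarith
    · have h1 := le_fsup (fun p : Fin n × Fin n => |A p.1 p.2 - (x p.1 - x p.2)|) (j, i)
      simp only at h1
      have h2 : -(A j i - (x j - x i)) ≤ |A j i - (x j - x i)| := neg_le_abs _
      rw [hB i j, h]
      linarith

lemma mu_le_sup (B : Matrix (Fin n) (Fin n) ℝ) (x : Fin n → ℝ) (hn : 1 ≤ n) :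
    mpCycleMean B ≤ ⨆ p : Fin n × Fin n, (B p.1 p.2 + x p.2 - x p.1) := by
  haveI : Nonempty (Fin n) := ⟨⟨0, hn⟩⟩
  rw [mpCycleMean_eq]
  apply csSup_le (cmSet_nonempty hn B)
  rintro r ⟨k, hk, hkn, f, rfl⟩
  set R := ⨆ p : Fin n × Fin n, (B p.1 p.2 + x p.2 - x p.1) with hR
  rw [div_le_iff₀ (by positivity)]
  set g : Fin k → Fin k := fun t => (⟨((t : ℕ) + 1) % k, Nat.mod_lt _ hk⟩ : Fin k) with hg
  have hterm : ∀ t : Fin k, B (f t) (f (g t)) ≤ R + x (f t) - x (f (g t)) := by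
    intro t
    have h1 := le_fsup (fun p : Fin n × Fin n => B p.1 p.2 + x p.2 - x p.1) (f t, f (g t))
    simp only at h1
    linarith
  have hsum : ∑ t : Fin k, x (f (g t)) = ∑ t : Fin k, x (f t) :=
    Fintype.sum_bijective g (succMod_bijective k hk) _ _ (fun t => rfl)
  calc (∑ t : Fin k, B (f t) (f (g t)))
      ≤ ∑ t : Fin k, (R + x (f t) - x (f (g t))) := Finset.sum_le_sum (fun t _ => hterm t)
    _ = R * (k : ℝ) := by
        rw [Finset.sum_sub_distrib, Finset.sum_add_distrib, hsum, Finset.sum_const]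
        simp [mul_comm]
end MPAux

/-- `x` satisfies `max_{i,j} |A_{ij} − (x_i − x_j)| = μ` (i.e. minimizes
this Chebyshev distance) iff `x = (B − μ)^* ⊗ u` in max-plus arithmetic for some
`u ∈ ℝⁿ`, where `B_{ij} = max(A_{ij}, −A_{ji})` and `μ = λ(B)`. -/
theorem mp_cheb_minimizers {n : ℕ} (hn : 1 ≤ n) (A : Matrix (Fin n) (Fin n) ℝ)
    (B : Matrix (Fin n) (Fin n) ℝ) (hB : ∀ i j, B i j = max (A i j) (-(A j i)))
    (μ : ℝ) (hμ : μ = mpCycleMean B) (x : Fin n → ℝ) :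
    (⨆ p : Fin n × Fin n, |A p.1 p.2 - (x p.1 - x p.2)|) = μ ↔
      ∃ u : Fin n → ℝ, x = mpVecMul (mpStar (Matrix.of fun i j => B i j - μ)) u := by
  haveI : Nonempty (Fin n) := ⟨⟨0, hn⟩⟩
  set S : Matrix (Fin n) (Fin n) ℝ := Matrix.of fun i j => B i j - μ with hS
  have hμle : ∀ r ∈ MPAux.cmSet B, r ≤ μ := by
    intro r hr
    rw [hμ, MPAux.mpCycleMean_eq]
    exact le_csSup (MPAux.cmSet_bddAbove hn B) hr
  have hcyc : ∀ (a : Fin n) (l2 : List (Fin n)), l2.length + 1 ≤ n →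
      MPAux.wSum S ((a :: l2) ++ [a]) ≤ 0 :=
    fun a l2 h => MPAux.cycle_wSum_le B μ hn hμle a l2 h
  have hsubequiv : ((⨆ p : Fin n × Fin n, |A p.1 p.2 - (x p.1 - x p.2)|) = μ) ↔
      (∀ i j, S i j + x j ≤ x i) := by
    rw [MPAux.abs_sup_eq A B hB x hn]
    constructor
    · intro h i j
      have h1 := MPAux.le_fsup (fun p : Fin n × Fin n => B p.1 p.2 + x p.2 - x p.1) (i, j)
      rw [h] at h1
      simp only at h1
      have hSij : S i j = B i j - μ := rfl
      rw [hSij]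
      linarith
    · intro h
      apply le_antisymm
      · apply MPAux.fsup_le
        rintro ⟨i, j⟩
        have h1 := h i j
        have hSij : S i j = B i j - μ := rfl
        rw [hSij] at h1
        simp only
        linarith
      · rw [hμ]
        exact MPAux.mu_le_sup B x hn
  rw [hsubequiv]
  constructor
  · intro hsub
    refine ⟨x, ?_⟩
    funext i
    exact (MPAux.star_fix S x hsub i).symm
  · rintro ⟨u, hu⟩
    subst hu
    intro i j
    have h2 : ∀ k, mpStar S j k + u k ≤ (⨆ k' : Fin n, (mpStar S i k' + u k')) - S i j := by
      intro k
      have h3 := MPAux.le_fsup (fun k' : Fin n => mpStar S i k' + u k') k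
      have h4 := MPAux.star_absorb S hn hcyc i j k
      linarith
    have h5 := MPAux.fsup_le h2
    show S i j + (⨆ k : Fin n, (mpStar S j k + u k)) ≤ ⨆ k : Fin n, (mpStar S i k + u k)
    linarith


end
end
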